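/- arXiv:2309.03068 — 4 statements merged into one kernel-verified Lean document; each statement's English description precedes it below -/
import Mathlib

section
/- Let μ be a probability measure on B(0,1) ⊂ ℝ^d, C ≥ 1, s ∈ (0,d), ε ∈ (0,1/2]. If μ(B(x,r)) ≤ C r^s for all x ∈ ℝ^d and all r ∈ [δ, δ^ε], then for all sufficiently small δ > 0, the s-energy of μ at scale δ satisfies I_s^δ(μ) ≤ C δ^{-dε}. -/
open MeasureTheory Metric Set ENNReal

-- measurability of a radially decreasing function
lemma radial_meas {d : ℕ} (hd : 0 < d) (P : EuclideanSpace ℝ (Fin d) → ℝ)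
    (hPdec : ∀ x y : EuclideanSpace ℝ (Fin d), ‖x‖ ≤ ‖y‖ → P y ≤ P x) :
    Measurable P := by
  have : Nontrivial (EuclideanSpace ℝ (Fin d)) := by
    have : 0 < Module.finrank ℝ (EuclideanSpace ℝ (Fin d)) := by
      simpa [finrank_euclideanSpace_fin] using hd
    exact Module.nontrivial_of_finrank_pos this
  obtain ⟨e, he⟩ := exists_norm_eq (EuclideanSpace ℝ (Fin d)) (zero_le_one)
  set q : ℝ → ℝ := fun t => P ((max t 0) • e) with hq
  have hanti : Antitone q := by
    intro a b hab
    apply hPdec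
    simp only [norm_smul, he, mul_one, Real.norm_eq_abs,
      abs_of_nonneg (le_max_right a 0), abs_of_nonneg (le_max_right b 0)]
    exact max_le_max hab le_rfl
  have hcomp : P = fun x => q ‖x‖ := by
    funext x
    have h1 : ‖(max ‖x‖ 0) • e‖ = ‖x‖ := by
      rw [norm_smul, he, mul_one, Real.norm_eq_abs,
        abs_of_nonneg (le_max_right ‖x‖ 0), max_eq_left (norm_nonneg x)]
    have := le_antisymm (hPdec _ _ h1.le) (hPdec _ _ h1.ge)
    simpa [q] using this
  rw [hcomp]
  exact hanti.measurable.comp measurable_norm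

noncomputable def Phi (d : ℕ) (δ : ℝ) (P : EuclideanSpace ℝ (Fin d) → ℝ)
    (μ : Measure (EuclideanSpace ℝ (Fin d))) (y : EuclideanSpace ℝ (Fin d)) : ℝ≥0∞ :=
  ∫⁻ z, ENNReal.ofReal (δ ^ (-(d:ℝ)) * P (δ⁻¹ • (y - z))) ∂μ

section aux
variable {d : ℕ} {δ : ℝ} {P : EuclideanSpace ℝ (Fin d) → ℝ}
  {μ : Measure (EuclideanSpace ℝ (Fin d))}

lemma P_nonneg (hPlow : ∀ x, Set.indicator (Metric.closedBall (0 : EuclideanSpace ℝ (Fin d)) (1 / 2)) 1 x ≤ P x) (x : EuclideanSpace ℝ (Fin d)) : 0 ≤ P x :=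
  le_trans (Set.indicator_nonneg (fun _ _ => zero_le_one) x) (hPlow x)

lemma P_le_one
    (hPupp : ∀ x, P x ≤ Set.indicator (Metric.closedBall (0 : EuclideanSpace ℝ (Fin d)) 1) 1 x)
    (x : EuclideanSpace ℝ (Fin d)) : P x ≤ 1 := by
  refine (hPupp x).trans ?_
  by_cases h : x ∈ Metric.closedBall (0 : EuclideanSpace ℝ (Fin d)) 1
  · simp [Set.indicator_of_mem h]
  · simp [Set.indicator_of_notMem h]

lemma P_zero
    (hPlow : ∀ x, Set.indicator (Metric.closedBall (0 : EuclideanSpace ℝ (Fin d)) (1 / 2)) 1 x ≤ P x)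
    (hPupp : ∀ x, P x ≤ Set.indicator (Metric.closedBall (0 : EuclideanSpace ℝ (Fin d)) 1) 1 x)
    {x : EuclideanSpace ℝ (Fin d)} (hx : 1 < ‖x‖) : P x = 0 := by
  have h : x ∉ Metric.closedBall (0 : EuclideanSpace ℝ (Fin d)) 1 := by
    simp [Metric.mem_closedBall, dist_zero_right]; linarith
  have := hPupp x
  rw [Set.indicator_of_notMem h] at this
  exact le_antisymm this (P_nonneg hPlow x)

-- the key vanishing property of the mollified integrand
lemma P_shift_zero (hδ : 0 < δ)
    (hPlow : ∀ x, Set.indicator (Metric.closedBall (0 : EuclideanSpace ℝ (Fin d)) (1 / 2)) 1 x ≤ P x)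
    (hPupp : ∀ x, P x ≤ Set.indicator (Metric.closedBall (0 : EuclideanSpace ℝ (Fin d)) 1) 1 x)
    {y z : EuclideanSpace ℝ (Fin d)} (h : δ < dist y z) : P (δ⁻¹ • (y - z)) = 0 := by
  apply P_zero hPlow hPupp
  rw [norm_smul, norm_inv, Real.norm_eq_abs, abs_of_pos hδ, ← dist_eq_norm]
  rw [← div_eq_inv_mul, lt_div_iff₀ hδ]
  linarith

lemma g_le_indicator (hδ : 0 < δ)
    (hPlow : ∀ x, Set.indicator (Metric.closedBall (0 : EuclideanSpace ℝ (Fin d)) (1 / 2)) 1 x ≤ P x)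
    (hPupp : ∀ x, P x ≤ Set.indicator (Metric.closedBall (0 : EuclideanSpace ℝ (Fin d)) 1) 1 x)
    (y z : EuclideanSpace ℝ (Fin d)) :
    ENNReal.ofReal (δ ^ (-(d:ℝ)) * P (δ⁻¹ • (y - z)))
      ≤ ENNReal.ofReal (δ ^ (-(d:ℝ))) * (Metric.closedBall y δ).indicator 1 z := by
  by_cases h : z ∈ Metric.closedBall y δ
  · rw [Set.indicator_of_mem h]
    simp only [Pi.one_apply, mul_one]
    refine ENNReal.ofReal_le_ofReal ?_
    have := P_le_one hPupp (δ⁻¹ • (y - z))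
    nlinarith [Real.rpow_pos_of_pos hδ (-(d:ℝ)), P_nonneg hPlow (δ⁻¹ • (y - z))]
  · rw [Set.indicator_of_notMem h]
    have : δ < dist y z := by
      rw [Metric.mem_closedBall, not_le] at h; rwa [dist_comm]
    rw [P_shift_zero hδ hPlow hPupp this]
    simp

lemma Phi_le (hδ : 0 < δ)
    (hPlow : ∀ x, Set.indicator (Metric.closedBall (0 : EuclideanSpace ℝ (Fin d)) (1 / 2)) 1 x ≤ P x)
    (hPupp : ∀ x, P x ≤ Set.indicator (Metric.closedBall (0 : EuclideanSpace ℝ (Fin d)) 1) 1 x)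
    (y : EuclideanSpace ℝ (Fin d)) :
    Phi d δ P μ y ≤ ENNReal.ofReal (δ ^ (-(d:ℝ))) * μ (Metric.closedBall y δ) := by
  calc Phi d δ P μ y ≤ ∫⁻ z, ENNReal.ofReal (δ ^ (-(d:ℝ))) * (Metric.closedBall y δ).indicator 1 z ∂μ :=
        lintegral_mono (g_le_indicator hδ hPlow hPupp y)
    _ = ENNReal.ofReal (δ ^ (-(d:ℝ))) * μ (Metric.closedBall y δ) := by
        rw [lintegral_const_mul _ ((measurable_one.indicator measurableSet_closedBall)),
          lintegral_indicator_one measurableSet_closedBall]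

lemma scale_one (hδ : 0 < δ) (z : EuclideanSpace ℝ (Fin d)) :
    ENNReal.ofReal (δ ^ (-(d:ℝ))) * volume (Metric.closedBall z δ)
      = volume (Metric.ball (0 : EuclideanSpace ℝ (Fin d)) 1) := by
  rw [MeasureTheory.Measure.addHaar_closedBall (μ := volume) z hδ.le, finrank_euclideanSpace_fin,
    ← mul_assoc, ← ENNReal.ofReal_mul (Real.rpow_nonneg hδ.le _)]
  rw [← Real.rpow_natCast δ d, ← Real.rpow_add hδ]
  simp

end aux

section aux2
variable {d : ℕ} {δ : ℝ} {P : EuclideanSpace ℝ (Fin d) → ℝ}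
  {μ : Measure (EuclideanSpace ℝ (Fin d))}

lemma g_meas (hd : 0 < d) (hδ : 0 < δ)
    (hPdec : ∀ x y : EuclideanSpace ℝ (Fin d), ‖x‖ ≤ ‖y‖ → P y ≤ P x) :
    Measurable (fun p : (EuclideanSpace ℝ (Fin d)) × (EuclideanSpace ℝ (Fin d)) =>
      ENNReal.ofReal (δ ^ (-(d:ℝ)) * P (δ⁻¹ • (p.1 - p.2)))) := by
  apply ENNReal.measurable_ofReal.comp
  apply Measurable.const_mul
  exact (radial_meas hd P hPdec).comp ((measurable_fst.sub measurable_snd).const_smul δ⁻¹)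

lemma Phi_meas [SFinite μ] (hd : 0 < d) (hδ : 0 < δ)
    (hPdec : ∀ x y : EuclideanSpace ℝ (Fin d), ‖x‖ ≤ ‖y‖ → P y ≤ P x) :
    Measurable (Phi d δ P μ) :=
  (g_meas hd hδ hPdec).lintegral_prod_right'

lemma mass_le [IsProbabilityMeasure μ] (hd : 0 < d) (hδ : 0 < δ)
    (hPdec : ∀ x y : EuclideanSpace ℝ (Fin d), ‖x‖ ≤ ‖y‖ → P y ≤ P x)
    (hPlow : ∀ x, Set.indicator (Metric.closedBall (0 : EuclideanSpace ℝ (Fin d)) (1 / 2)) 1 x ≤ P x)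
    (hPupp : ∀ x, P x ≤ Set.indicator (Metric.closedBall (0 : EuclideanSpace ℝ (Fin d)) 1) 1 x)
    {B S : Set (EuclideanSpace ℝ (Fin d))} (hB : MeasurableSet B) (hSm : MeasurableSet S)
    (hS : ∀ z ∉ S, ∀ y ∈ B, δ < dist y z) :
    ∫⁻ y in B, Phi d δ P μ y ∂volume
      ≤ volume (Metric.ball (0 : EuclideanSpace ℝ (Fin d)) 1) * μ S := by
  set g : (EuclideanSpace ℝ (Fin d)) → (EuclideanSpace ℝ (Fin d)) → ℝ≥0∞ :=
    fun y z => ENNReal.ofReal (δ ^ (-(d:ℝ)) * P (δ⁻¹ • (y - z))) with hg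
  set h : (EuclideanSpace ℝ (Fin d)) → (EuclideanSpace ℝ (Fin d)) → ℝ≥0∞ :=
    fun y z => (B.indicator 1 y) * g y z with hh
  have hmeas : AEMeasurable (Function.uncurry h) (volume.prod μ) := by
    apply Measurable.aemeasurable
    exact ((measurable_one.indicator hB).comp measurable_fst).mul (g_meas hd hδ hPdec)
  have step1 : ∫⁻ y in B, Phi d δ P μ y ∂volume = ∫⁻ y, ∫⁻ z, h y z ∂μ ∂volume := by
    rw [← lintegral_indicator hB]
    congr 1; funext y
    by_cases hy : y ∈ B
    · simp only [Set.indicator_of_mem hy, hh, Pi.one_apply, one_mul, Phi, hg]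
    · simp [Set.indicator_of_notMem hy, hh]
  have step2 : ∫⁻ y, ∫⁻ z, h y z ∂μ ∂volume = ∫⁻ z, ∫⁻ y, h y z ∂volume ∂μ :=
    lintegral_lintegral_swap hmeas
  have step3 : ∀ z, ∫⁻ y, h y z ∂volume
      ≤ S.indicator (fun _ => volume (Metric.ball (0 : EuclideanSpace ℝ (Fin d)) 1)) z := by
    intro z
    by_cases hz : z ∈ S
    · rw [Set.indicator_of_mem hz]
      have hb : ∀ y, h y z ≤ ENNReal.ofReal (δ ^ (-(d:ℝ))) * (Metric.closedBall z δ).indicator 1 y := by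
        intro y
        have h1 : h y z ≤ g y z := by
          rw [hh]; by_cases hy : y ∈ B
          · simp [Set.indicator_of_mem hy]
          · simp [Set.indicator_of_notMem hy]
        refine h1.trans ?_
        by_cases hmem : y ∈ Metric.closedBall z δ
        · rw [Set.indicator_of_mem hmem]
          simp only [Pi.one_apply, mul_one, hg]
          refine ENNReal.ofReal_le_ofReal ?_
          have := P_le_one hPupp (δ⁻¹ • (y - z))
          nlinarith [Real.rpow_pos_of_pos hδ (-(d:ℝ)), P_nonneg hPlow (δ⁻¹ • (y - z))]
        · rw [Set.indicator_of_notMem hmem]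
          have : δ < dist y z := by
            rw [Metric.mem_closedBall, not_le] at hmem; exact hmem
          rw [hg]; simp only
          rw [P_shift_zero hδ hPlow hPupp this]
          simp
      calc ∫⁻ y, h y z ∂volume
          ≤ ∫⁻ y, ENNReal.ofReal (δ ^ (-(d:ℝ))) * (Metric.closedBall z δ).indicator 1 y ∂volume :=
            lintegral_mono hb
        _ = ENNReal.ofReal (δ ^ (-(d:ℝ))) * volume (Metric.closedBall z δ) := by
            rw [lintegral_const_mul _ (measurable_one.indicator measurableSet_closedBall),
              lintegral_indicator_one measurableSet_closedBall]
        _ = volume (Metric.ball (0 : EuclideanSpace ℝ (Fin d)) 1) := scale_one hδ z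
    · rw [Set.indicator_of_notMem hz]
      have : ∀ y, h y z = 0 := by
        intro y
        by_cases hy : y ∈ B
        · rw [hh]; simp only [Set.indicator_of_mem hy, Pi.one_apply, one_mul, hg]
          rw [P_shift_zero hδ hPlow hPupp (hS z hz y hy)]; simp
        · simp [hh, Set.indicator_of_notMem hy]
      simp [this]
  calc ∫⁻ y in B, Phi d δ P μ y ∂volume = ∫⁻ z, ∫⁻ y, h y z ∂volume ∂μ := step1.trans step2
    _ ≤ ∫⁻ z, S.indicator (fun _ => volume (Metric.ball (0 : EuclideanSpace ℝ (Fin d)) 1)) z ∂μ :=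
        lintegral_mono step3
    _ = volume (Metric.ball (0 : EuclideanSpace ℝ (Fin d)) 1) * μ S := by
        rw [lintegral_indicator hSm]; simp

lemma mass_total [IsProbabilityMeasure μ] (hd : 0 < d) (hδ : 0 < δ)
    (hPdec : ∀ x y : EuclideanSpace ℝ (Fin d), ‖x‖ ≤ ‖y‖ → P y ≤ P x)
    (hPlow : ∀ x, Set.indicator (Metric.closedBall (0 : EuclideanSpace ℝ (Fin d)) (1 / 2)) 1 x ≤ P x)
    (hPupp : ∀ x, P x ≤ Set.indicator (Metric.closedBall (0 : EuclideanSpace ℝ (Fin d)) 1) 1 x) :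
    ∫⁻ y, Phi d δ P μ y ∂volume ≤ volume (Metric.ball (0 : EuclideanSpace ℝ (Fin d)) 1) := by
  have := mass_le (μ := μ) hd hδ hPdec hPlow hPupp (B := Set.univ) (S := Set.univ)
    MeasurableSet.univ MeasurableSet.univ (fun z hz => absurd (Set.mem_univ z) hz)
  simpa [Measure.restrict_univ] using this

end aux2

lemma kernel_ball {d : ℕ} {δ s : ℝ} (hδ : 0 < δ) (hs : 0 < s) (hsd : s < (d:ℝ))
    (x : EuclideanSpace ℝ (Fin d)) :
    ∫⁻ y in Metric.closedBall x δ, ENNReal.ofReal (‖x - y‖ ^ (-s)) ∂volume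
      ≤ volume (Metric.ball (0 : EuclideanSpace ℝ (Fin d)) 1) *
        ENNReal.ofReal ((2 ^ s * (1 - 2 ^ (s - (d:ℝ)))⁻¹) * δ ^ ((d:ℝ) - s)) := by
  have h2 : (0:ℝ) < 2 := two_pos
  set F : ℕ → EuclideanSpace ℝ (Fin d) → ℝ≥0∞ := fun j y =>
    (Metric.closedBall x (δ * (2:ℝ) ^ (-(j:ℝ)))).indicator
      (fun _ => ENNReal.ofReal ((δ * (2:ℝ) ^ (-((j:ℝ)+1))) ^ (-s))) y with hF
  have hptwise : ∀ y, (Metric.closedBall x δ).indicator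
      (fun y => ENNReal.ofReal (‖x - y‖ ^ (-s))) y ≤ ∑' j, F j y := by
    intro y
    by_cases hy : y ∈ Metric.closedBall x δ
    · rw [Set.indicator_of_mem hy]
      rcases eq_or_ne y x with rfl | hne
      · simp [Real.zero_rpow (neg_ne_zero.mpr hs.ne')]
      · set r : ℝ := ‖x - y‖ with hr
        have hrpos : 0 < r := by
          rw [hr, norm_pos_iff, sub_ne_zero]; exact fun h => hne h.symm
        have hrδ : r ≤ δ := by
          rw [hr, ← dist_eq_norm, dist_comm]; exact Metric.mem_closedBall.mp hy
        set j : ℕ := ⌊Real.logb 2 (δ / r)⌋₊ with hj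
        have hdr1 : 1 ≤ δ / r := (one_le_div hrpos).mpr hrδ
        have h2j : (2:ℝ) ^ (j:ℝ) ≤ δ / r := by
          rw [← Real.rpow_logb h2 (by norm_num) (by positivity : (0:ℝ) < δ / r)]
          exact Real.rpow_le_rpow_of_exponent_le one_le_two
            (Nat.floor_le (Real.logb_nonneg one_lt_two hdr1))
        have h2j' : δ / r < (2:ℝ) ^ ((j:ℝ) + 1) := by
          rw [← Real.rpow_logb h2 (by norm_num) (by positivity : (0:ℝ) < δ / r)]
          refine Real.rpow_lt_rpow_of_exponent_lt one_lt_two ?_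
          have := Nat.lt_floor_add_one (Real.logb 2 (δ / r))
          rw [hj]; exact_mod_cast this
        have hmem : y ∈ Metric.closedBall x (δ * (2:ℝ) ^ (-(j:ℝ))) := by
          rw [Metric.mem_closedBall, dist_comm, dist_eq_norm, ← hr]
          rw [Real.rpow_neg h2.le, mul_comm, inv_mul_eq_div, le_div_iff₀ (by positivity)]
          rw [mul_comm]
          exact (le_div_iff₀ hrpos).mp h2j
        have hlow : δ * (2:ℝ) ^ (-((j:ℝ)+1)) ≤ r := by
          rw [Real.rpow_neg h2.le, mul_comm, inv_mul_eq_div, div_le_iff₀ (by positivity)]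
          rw [div_lt_iff₀ hrpos] at h2j'
          nlinarith
        calc ENNReal.ofReal (r ^ (-s)) ≤ F j y := by
              rw [hF]; simp only
              rw [Set.indicator_of_mem hmem]
              refine ENNReal.ofReal_le_ofReal ?_
              rw [Real.rpow_neg hrpos.le, Real.rpow_neg (by positivity)]
              exact inv_anti₀ (Real.rpow_pos_of_pos (by positivity) s)
                (Real.rpow_le_rpow (by positivity) hlow hs.le)
          _ ≤ ∑' j, F j y := ENNReal.le_tsum j
    · rw [Set.indicator_of_notMem hy]; exact zero_le
  have hFmeas : ∀ j, AEMeasurable (F j) volume := fun j =>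
    (measurable_const.indicator measurableSet_closedBall).aemeasurable
  calc ∫⁻ y in Metric.closedBall x δ, ENNReal.ofReal (‖x - y‖ ^ (-s)) ∂volume
      = ∫⁻ y, (Metric.closedBall x δ).indicator
          (fun y => ENNReal.ofReal (‖x - y‖ ^ (-s))) y ∂volume := by
        rw [lintegral_indicator measurableSet_closedBall]
    _ ≤ ∫⁻ y, ∑' j, F j y ∂volume := lintegral_mono hptwise
    _ = ∑' j, ∫⁻ y, F j y ∂volume := lintegral_tsum hFmeas
    _ = ∑' (j : ℕ), ENNReal.ofReal ((δ * (2:ℝ) ^ (-((j:ℝ)+1))) ^ (-s)) *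
          volume (Metric.closedBall x (δ * (2:ℝ) ^ (-(j:ℝ)))) := by
        refine tsum_congr (fun j => ?_)
        rw [hF]; simp only
        rw [lintegral_indicator measurableSet_closedBall, setLIntegral_const]
    _ = ∑' (j : ℕ), (ENNReal.ofReal (2 ^ s * δ ^ ((d:ℝ) - s)) *
          (ENNReal.ofReal ((2:ℝ) ^ (s - (d:ℝ)))) ^ j) *
          volume (Metric.ball (0 : EuclideanSpace ℝ (Fin d)) 1) := by
        refine tsum_congr (fun j => ?_)
        rw [MeasureTheory.Measure.addHaar_closedBall (μ := volume) x (by positivity),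
          finrank_euclideanSpace_fin, ← mul_assoc]
        congr 1
        rw [← ENNReal.ofReal_pow (by positivity), ← ENNReal.ofReal_mul (by positivity),
          ← ENNReal.ofReal_mul (by positivity)]
        congr 1
        rw [← Real.rpow_natCast (δ * (2:ℝ) ^ (-(j:ℝ))) d,
          ← Real.rpow_natCast ((2:ℝ) ^ (s - (d:ℝ))) j,
          ← Real.rpow_mul h2.le,
          Real.mul_rpow hδ.le (Real.rpow_nonneg h2.le _),
          Real.mul_rpow hδ.le (Real.rpow_nonneg h2.le _),
          ← Real.rpow_mul h2.le, ← Real.rpow_mul h2.le,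
          mul_mul_mul_comm, ← Real.rpow_add hδ, mul_comm ((2:ℝ)^s) _, mul_assoc,
          ← Real.rpow_add h2, ← Real.rpow_add h2]
        congr 1 <;> first | rfl | ring_nf | (congr 1; ring)
    _ = (ENNReal.ofReal (2 ^ s * δ ^ ((d:ℝ) - s)) * (1 - ENNReal.ofReal ((2:ℝ) ^ (s - (d:ℝ))))⁻¹) *
          volume (Metric.ball (0 : EuclideanSpace ℝ (Fin d)) 1) := by
        rw [ENNReal.tsum_mul_right, ENNReal.tsum_mul_left, ENNReal.tsum_geometric]
    _ ≤ volume (Metric.ball (0 : EuclideanSpace ℝ (Fin d)) 1) *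
        ENNReal.ofReal ((2 ^ s * (1 - 2 ^ (s - (d:ℝ)))⁻¹) * δ ^ ((d:ℝ) - s)) := by
        rw [mul_comm]
        refine mul_le_mul_right (le_of_eq ?_) _
        have hq1 : (2:ℝ) ^ (s - (d:ℝ)) < 1 :=
          Real.rpow_lt_one_of_one_lt_of_neg one_lt_two (by linarith)
        rw [← ENNReal.ofReal_one, ← ENNReal.ofReal_sub _ (by positivity),
          ← ENNReal.ofReal_inv_of_pos (by linarith), ← ENNReal.ofReal_mul (by positivity)]
        congr 1
        ring
-- G-bound chunk (needs t2 content: Phi etc.)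

set_option maxHeartbeats 1600000 in
lemma G_bound {d : ℕ} {δ C s ε : ℝ} {P : EuclideanSpace ℝ (Fin d) → ℝ}
    {μ : Measure (EuclideanSpace ℝ (Fin d))} [IsProbabilityMeasure μ]
    (hd : 0 < d) (hC : 1 ≤ C) (hs : 0 < s) (hsd : s < (d:ℝ)) (hε : 0 < ε) (hε' : ε ≤ 1/2)
    (hPdec : ∀ x y : EuclideanSpace ℝ (Fin d), ‖x‖ ≤ ‖y‖ → P y ≤ P x)
    (hPlow : ∀ x, Set.indicator (Metric.closedBall (0 : EuclideanSpace ℝ (Fin d)) (1 / 2)) 1 x ≤ P x)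
    (hPupp : ∀ x, P x ≤ Set.indicator (Metric.closedBall (0 : EuclideanSpace ℝ (Fin d)) 1) 1 x)
    (hδ : 0 < δ) (hδ1 : δ < 1) (hhalf : δ ^ (1-ε) ≤ 1/2)
    (hFrost : ∀ (x : EuclideanSpace ℝ (Fin d)) (r : ℝ), r ∈ Set.Icc δ (δ ^ ε) →
        μ (Metric.closedBall x r) ≤ ENNReal.ofReal (C * r ^ s))
    (x : EuclideanSpace ℝ (Fin d)) :
    ∫⁻ y, Phi d δ P μ y * ENNReal.ofReal (‖x - y‖ ^ (-s)) ∂volume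
      ≤ volume (Metric.ball (0 : EuclideanSpace ℝ (Fin d)) 1) *
        ENNReal.ofReal (C * (2 ^ s * (1 - 2 ^ (s - (d:ℝ)))⁻¹)
          + (⌊Real.logb 2 (δ ^ (ε-1) / 2)⌋₊ : ℝ) * (C * 4 ^ s)
          + (δ ^ ε / 4) ^ (-s)) := by
  classical
  have h2 : (0:ℝ) < 2 := two_pos
  set V : ℝ≥0∞ := volume (Metric.ball (0 : EuclideanSpace ℝ (Fin d)) 1) with hV
  set c₂ : ℝ := 2 ^ s * (1 - 2 ^ (s - (d:ℝ)))⁻¹ with hc₂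
  have hq1 : (2:ℝ) ^ (s - (d:ℝ)) < 1 :=
    Real.rpow_lt_one_of_one_lt_of_neg one_lt_two (by linarith)
  have hc₂pos : 0 < c₂ := by
    have h1q : (0:ℝ) < 1 - 2 ^ (s - (d:ℝ)) := by linarith
    positivity
  set n : ℕ := ⌊Real.logb 2 (δ ^ (ε-1) / 2)⌋₊ with hn
  set κ : EuclideanSpace ℝ (Fin d) → ℝ≥0∞ := fun y => ENNReal.ofReal (‖x - y‖ ^ (-s)) with hκ
  set Φ : EuclideanSpace ℝ (Fin d) → ℝ≥0∞ := Phi d δ P μ with hΦ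
  -- basic smallness facts
  have hδε : δ ≤ δ ^ ε := by
    nth_rewrite 1 [← Real.rpow_one δ]
    exact Real.rpow_le_rpow_of_exponent_ge hδ hδ1.le (by linarith)
  have hδεpos : 0 < δ ^ ε := Real.rpow_pos_of_pos hδ ε
  have hsplit : δ ^ ε * δ ^ (1-ε) = δ := by
    rw [← Real.rpow_add hδ]; norm_num
  have hδhalf : δ ≤ δ ^ ε / 2 := by
    have h := mul_le_mul_of_nonneg_left hhalf hδεpos.le
    rw [hsplit] at h
    linarith
  have hinv : δ ^ (ε-1) = (δ ^ (1-ε))⁻¹ := by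
    rw [← Real.rpow_neg hδ.le]; norm_num
  have harg1 : 1 ≤ δ ^ (ε-1) / 2 := by
    have h0 : 0 < δ ^ (1-ε) := Real.rpow_pos_of_pos hδ _
    rw [hinv, le_div_iff₀ h2, one_mul]
    calc (2:ℝ) = (1/2)⁻¹ := by norm_num
      _ ≤ (δ ^ (1-ε))⁻¹ := inv_anti₀ h0 hhalf
  have h2n : (2:ℝ) ^ n ≤ δ ^ (ε-1) / 2 := by
    calc (2:ℝ) ^ n = (2:ℝ) ^ (n:ℝ) := (Real.rpow_natCast 2 n).symm
      _ ≤ (2:ℝ) ^ Real.logb 2 (δ ^ (ε-1) / 2) :=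
          Real.rpow_le_rpow_of_exponent_le one_le_two
            (Nat.floor_le (Real.logb_nonneg one_lt_two harg1))
      _ = δ ^ (ε-1) / 2 := Real.rpow_logb h2 (by norm_num) (by linarith)
  have h2nδ : (2:ℝ) ^ n * δ ≤ δ ^ ε / 2 := by
    have := mul_le_mul_of_nonneg_right h2n hδ.le
    calc (2:ℝ) ^ n * δ ≤ δ ^ (ε-1) / 2 * δ := this
      _ = δ ^ (ε-1) * δ ^ (1:ℝ) / 2 := by rw [Real.rpow_one]; ring
      _ = δ ^ ε / 2 := by rw [← Real.rpow_add hδ]; norm_num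
  have houter : δ ^ ε / 4 < (2:ℝ) ^ n * δ := by
    have h1 : Real.logb 2 (δ ^ (ε-1) / 2) < ((n+1:ℕ):ℝ) := by
      rw [hn]; push_cast; exact Nat.lt_floor_add_one _
    have h2' := Real.rpow_lt_rpow_of_exponent_lt one_lt_two h1
    rw [Real.rpow_logb h2 (by norm_num) (by linarith : (0:ℝ) < δ ^ (ε-1) / 2),
      Real.rpow_natCast] at h2'
    have hlt : δ ^ (ε-1) / 2 < (2:ℝ) ^ (n+1) := h2'
    have hmul := mul_lt_mul_of_pos_right hlt hδ
    have hre : δ ^ (ε-1) / 2 * δ = δ ^ ε / 2 := by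
      rw [div_mul_eq_mul_div]
      nth_rewrite 2 [← Real.rpow_one δ]
      rw [← Real.rpow_add hδ]; norm_num
    rw [hre] at hmul
    calc δ ^ ε / 4 < (2:ℝ) ^ (n+1) * δ / 2 := by linarith
      _ = (2:ℝ) ^ n * δ := by rw [pow_succ]; ring
  -- the balls
  set B : ℕ → Set (EuclideanSpace ℝ (Fin d)) :=
    fun k => Metric.closedBall x ((2:ℝ) ^ k * δ) with hB
  have hBmeas : ∀ k, MeasurableSet (B k) := fun k => measurableSet_closedBall
  have hΦmeas : Measurable Φ := Phi_meas hd hδ hPdec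
  have hκmeas : Measurable κ := by
    apply ENNReal.measurable_ofReal.comp
    exact (Measurable.norm (measurable_const.sub measurable_id)).pow_const (-s)
  -- pointwise partition
  have hpart : ∀ y, Φ y * κ y ≤
      (B 0).indicator (fun y => Φ y * κ y) y
      + (∑ k ∈ Finset.Icc 1 n, (B k \ B (k-1)).indicator (fun y => Φ y * κ y) y)
      + ((B n)ᶜ).indicator (fun y => Φ y * κ y) y := by
    intro y
    by_cases h0 : y ∈ B 0
    · rw [Set.indicator_of_mem h0]
      exact le_add_right (le_add_right le_rfl)
    · by_cases hmem : y ∈ B n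
      · have hex : ∃ k, y ∈ B k := ⟨n, hmem⟩
        set k₀ : ℕ := Nat.find hex with hk₀
        have hk₀mem : y ∈ B k₀ := Nat.find_spec hex
        have hk₀le : k₀ ≤ n := Nat.find_le hmem
        have hk₀pos : 1 ≤ k₀ := by
          rcases Nat.eq_zero_or_pos k₀ with h | h
          · exact absurd (h ▸ hk₀mem) h0
          · exact h
        have hnotmem : y ∉ B (k₀ - 1) := Nat.find_min hex (by omega)
        have hsingle : Φ y * κ y ≤
            ∑ k ∈ Finset.Icc 1 n, (B k \ B (k-1)).indicator (fun y => Φ y * κ y) y := by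
          have hyk : y ∈ B k₀ \ B (k₀ - 1) := ⟨hk₀mem, hnotmem⟩
          calc Φ y * κ y = (B k₀ \ B (k₀-1)).indicator (fun y => Φ y * κ y) y := by
                rw [Set.indicator_of_mem hyk]
            _ ≤ _ := Finset.single_le_sum (f := fun k =>
                  (B k \ B (k-1)).indicator (fun y => Φ y * κ y) y)
                  (fun _ _ => zero_le) (Finset.mem_Icc.mpr ⟨hk₀pos, hk₀le⟩)
        calc Φ y * κ y ≤ _ := hsingle
          _ ≤ _ := le_add_right (le_add_left le_rfl)
      · rw [Set.indicator_of_mem (Set.mem_compl hmem)]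
        exact le_add_left le_rfl
  -- integrate the partition
  have hmeas1 : Measurable ((B 0).indicator (fun y => Φ y * κ y)) :=
    (hΦmeas.mul hκmeas).indicator (hBmeas 0)
  have hmeas2 : Measurable (fun y => ∑ k ∈ Finset.Icc 1 n,
      (B k \ B (k-1)).indicator (fun y => Φ y * κ y) y) :=
    Finset.measurable_sum _ (fun k _ => (hΦmeas.mul hκmeas).indicator
      ((hBmeas k).diff (hBmeas (k-1))))
  have step : ∫⁻ y, Φ y * κ y ∂volume ≤
      (∫⁻ y, (B 0).indicator (fun y => Φ y * κ y) y ∂volume)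
      + (∫⁻ y, ∑ k ∈ Finset.Icc 1 n, (B k \ B (k-1)).indicator (fun y => Φ y * κ y) y ∂volume)
      + (∫⁻ y, ((B n)ᶜ).indicator (fun y => Φ y * κ y) y ∂volume) := by
    calc ∫⁻ y, Φ y * κ y ∂volume ≤ ∫⁻ y,
        ((B 0).indicator (fun y => Φ y * κ y) y
        + (∑ k ∈ Finset.Icc 1 n, (B k \ B (k-1)).indicator (fun y => Φ y * κ y) y)
        + ((B n)ᶜ).indicator (fun y => Φ y * κ y) y) ∂volume := lintegral_mono hpart
      _ = _ := by
        rw [lintegral_add_left (f := fun y => (B 0).indicator (fun y => Φ y * κ y) y + ∑ k ∈ Finset.Icc 1 n, (B k \ B (k-1)).indicator (fun y => Φ y * κ y) y) (hmeas1.add hmeas2), lintegral_add_left hmeas1]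
  -- piece 0
  have hB0 : B 0 = Metric.closedBall x δ := by rw [hB]; norm_num
  have piece0 : ∫⁻ y, (B 0).indicator (fun y => Φ y * κ y) y ∂volume
      ≤ V * ENNReal.ofReal (C * c₂) := by
    rw [lintegral_indicator (hBmeas 0), hB0]
    have hsup : ∀ y ∈ Metric.closedBall x δ, Φ y * κ y ≤
        ENNReal.ofReal (δ ^ (-(d:ℝ)) * (C * δ ^ s)) * κ y := by
      intro y _
      refine mul_le_mul_left ?_ _
      calc Φ y ≤ ENNReal.ofReal (δ ^ (-(d:ℝ))) * μ (Metric.closedBall y δ) :=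
            Phi_le hδ hPlow hPupp y
        _ ≤ ENNReal.ofReal (δ ^ (-(d:ℝ))) * ENNReal.ofReal (C * δ ^ s) :=
            mul_le_mul_right (hFrost y δ ⟨le_rfl, hδε⟩) _
        _ = ENNReal.ofReal (δ ^ (-(d:ℝ)) * (C * δ ^ s)) := by
            rw [← ENNReal.ofReal_mul (Real.rpow_nonneg hδ.le _)]
    calc ∫⁻ y in Metric.closedBall x δ, Φ y * κ y ∂volume
        ≤ ∫⁻ y in Metric.closedBall x δ, ENNReal.ofReal (δ ^ (-(d:ℝ)) * (C * δ ^ s)) * κ y ∂volume :=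
          setLIntegral_mono (measurable_const.mul hκmeas) hsup
      _ = ENNReal.ofReal (δ ^ (-(d:ℝ)) * (C * δ ^ s)) * ∫⁻ y in Metric.closedBall x δ, κ y ∂volume := by
          rw [lintegral_const_mul _ hκmeas]
      _ ≤ ENNReal.ofReal (δ ^ (-(d:ℝ)) * (C * δ ^ s)) * (V * ENNReal.ofReal (c₂ * δ ^ ((d:ℝ) - s))) :=
          mul_le_mul_right (kernel_ball hδ hs hsd x) _
      _ = V * ENNReal.ofReal ((δ ^ (-(d:ℝ)) * (C * δ ^ s)) * (c₂ * δ ^ ((d:ℝ) - s))) := by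
          rw [← mul_assoc, mul_comm (ENNReal.ofReal _) V, mul_assoc,
            ← ENNReal.ofReal_mul (by positivity)]
      _ = V * ENNReal.ofReal (C * c₂) := by
          congr 1
          rw [show (δ ^ (-(d:ℝ)) * (C * δ ^ s)) * (c₂ * δ ^ ((d:ℝ) - s))
            = (δ ^ (-(d:ℝ)) * δ ^ s * δ ^ ((d:ℝ) - s)) * (C * c₂) from by ring,
            ← Real.rpow_add hδ, ← Real.rpow_add hδ]
          norm_num
  -- middle pieces
  have piecemid : ∀ k ∈ Finset.Icc 1 n,
      ∫⁻ y, (B k \ B (k-1)).indicator (fun y => Φ y * κ y) y ∂volume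
        ≤ V * ENNReal.ofReal (C * 4 ^ s) := by
    intro k hk
    obtain ⟨hk1, hkn⟩ := Finset.mem_Icc.mp hk
    have hrad : (0:ℝ) < 2 ^ (k-1) * δ := by positivity
    have hrad2 : (0:ℝ) < 2 ^ k * δ := by positivity
    have hκbd : ∀ y ∈ B k \ B (k-1), Φ y * κ y ≤
        ENNReal.ofReal (((2:ℝ) ^ (k-1) * δ) ^ (-s)) * Φ y := by
      intro y hy
      rw [mul_comm]
      refine mul_le_mul_left ?_ _
      have hdist : (2:ℝ) ^ (k-1) * δ < dist y x := by
        have := hy.2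
        rw [hB, Metric.mem_closedBall, not_le] at this
        exact this
      have hnorm : (2:ℝ) ^ (k-1) * δ < ‖x - y‖ := by
        rw [← dist_eq_norm, dist_comm]; exact hdist
      refine ENNReal.ofReal_le_ofReal ?_
      rw [Real.rpow_neg (by positivity), Real.rpow_neg hrad.le]
      exact inv_anti₀ (Real.rpow_pos_of_pos hrad s)
        (Real.rpow_le_rpow hrad.le hnorm.le hs.le)
    have hSmass : ∫⁻ y in B k, Φ y ∂volume
        ≤ V * ENNReal.ofReal (C * ((2:ℝ) ^ k * δ + δ) ^ s) := by
      have h1 := mass_le (μ := μ) hd hδ hPdec hPlow hPupp (B := B k)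
        (S := Metric.closedBall x ((2:ℝ) ^ k * δ + δ)) (hBmeas k) measurableSet_closedBall ?_
      · refine h1.trans (mul_le_mul_right (hFrost x _ ⟨by nlinarith [mul_pos (pow_pos h2 k) hδ], ?_⟩) _)
        have hkln : (2:ℝ) ^ k ≤ 2 ^ n := pow_le_pow_right₀ one_le_two hkn
        have hthis : (2:ℝ) ^ k * δ ≤ δ ^ ε / 2 := le_trans (by nlinarith [hδ, hkln]) h2nδ
        linarith [hδhalf, hthis]
      · intro z hz y hy
        rw [Metric.mem_closedBall, not_le] at hz
        rw [hB, Metric.mem_closedBall] at hy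
        have h1 : dist z x ≤ dist z y + dist y x := dist_triangle z y x
        have h2'' : δ < dist z y := by linarith
        rwa [dist_comm] at h2''
    calc ∫⁻ y, (B k \ B (k-1)).indicator (fun y => Φ y * κ y) y ∂volume
        = ∫⁻ y in B k \ B (k-1), Φ y * κ y ∂volume :=
          lintegral_indicator ((hBmeas k).diff (hBmeas (k-1))) _
      _ ≤ ∫⁻ y in B k \ B (k-1), ENNReal.ofReal (((2:ℝ) ^ (k-1) * δ) ^ (-s)) * Φ y ∂volume :=
          setLIntegral_mono (measurable_const.mul hΦmeas) hκbd
      _ ≤ ∫⁻ y in B k, ENNReal.ofReal (((2:ℝ) ^ (k-1) * δ) ^ (-s)) * Φ y ∂volume :=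
          lintegral_mono_set Set.diff_subset
      _ = ENNReal.ofReal (((2:ℝ) ^ (k-1) * δ) ^ (-s)) * ∫⁻ y in B k, Φ y ∂volume := by
          rw [lintegral_const_mul _ hΦmeas]
      _ ≤ ENNReal.ofReal (((2:ℝ) ^ (k-1) * δ) ^ (-s)) *
            (V * ENNReal.ofReal (C * ((2:ℝ) ^ k * δ + δ) ^ s)) :=
          mul_le_mul_right hSmass _
      _ = V * ENNReal.ofReal ((((2:ℝ) ^ (k-1) * δ) ^ (-s)) * (C * ((2:ℝ) ^ k * δ + δ) ^ s)) := by
          rw [← mul_assoc, mul_comm (ENNReal.ofReal _) V, mul_assoc,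
            ← ENNReal.ofReal_mul (by positivity)]
      _ ≤ V * ENNReal.ofReal (C * 4 ^ s) := by
          refine mul_le_mul_right (ENNReal.ofReal_le_ofReal ?_) _
          have hbase : (2:ℝ) ^ k * δ + δ ≤ 4 * (2 ^ (k-1) * δ) := by
            have hk' : k = (k-1) + 1 := by omega
            have hb2 : (2:ℝ) ^ k = 2 ^ (k-1) * 2 := by nth_rewrite 1 [hk']; rw [pow_succ]
            rw [hb2]
            have h1k : (1:ℝ) ≤ 2 ^ (k-1) := one_le_pow₀ one_le_two
            have hX : δ ≤ 2 ^ (k-1) * δ := le_mul_of_one_le_left hδ.le h1k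
            linarith
          have hmono : ((2:ℝ) ^ k * δ + δ) ^ s ≤ (4 * (2 ^ (k-1) * δ)) ^ s :=
            Real.rpow_le_rpow (by positivity) hbase hs.le
          have hid : (((2:ℝ) ^ (k-1) * δ) ^ (-s)) * (4 * (2 ^ (k-1) * δ)) ^ s = 4 ^ s := by
            rw [Real.mul_rpow (by norm_num) hrad.le, Real.rpow_neg hrad.le]
            field_simp
          calc (((2:ℝ) ^ (k-1) * δ) ^ (-s)) * (C * ((2:ℝ) ^ k * δ + δ) ^ s)
              ≤ (((2:ℝ) ^ (k-1) * δ) ^ (-s)) * (C * (4 * (2 ^ (k-1) * δ)) ^ s) := by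
                have h0 : (0:ℝ) ≤ ((2:ℝ) ^ (k-1) * δ) ^ (-s) := Real.rpow_nonneg hrad.le _
                exact mul_le_mul_of_nonneg_left
                  (mul_le_mul_of_nonneg_left hmono (by linarith)) h0
            _ = C * 4 ^ s := by rw [show (((2:ℝ)^(k-1)*δ)^(-s)) * (C * (4*(2^(k-1)*δ))^s)
                  = C * ((((2:ℝ)^(k-1)*δ)^(-s)) * (4*(2^(k-1)*δ))^s) from by ring, hid]
  have piecemid_sum : ∫⁻ y, ∑ k ∈ Finset.Icc 1 n,
      (B k \ B (k-1)).indicator (fun y => Φ y * κ y) y ∂volume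
      ≤ V * ENNReal.ofReal ((n:ℝ) * (C * 4 ^ s)) := by
    calc ∫⁻ y, ∑ k ∈ Finset.Icc 1 n, (B k \ B (k-1)).indicator (fun y => Φ y * κ y) y ∂volume
        = ∑ k ∈ Finset.Icc 1 n, ∫⁻ y, (B k \ B (k-1)).indicator (fun y => Φ y * κ y) y ∂volume :=
          lintegral_finset_sum _ (fun k _ => (hΦmeas.mul hκmeas).indicator
            ((hBmeas k).diff (hBmeas (k-1))))
      _ ≤ ∑ k ∈ Finset.Icc 1 n, V * ENNReal.ofReal (C * 4 ^ s) :=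
          Finset.sum_le_sum piecemid
      _ = (n : ℝ≥0∞) * (V * ENNReal.ofReal (C * 4 ^ s)) := by
          rw [Finset.sum_const, Nat.card_Icc, Nat.add_sub_cancel, nsmul_eq_mul]
      _ = V * ENNReal.ofReal ((n:ℝ) * (C * 4 ^ s)) := by
          rw [← ENNReal.ofReal_natCast n, ← mul_assoc, mul_comm (ENNReal.ofReal _) V, mul_assoc,
            ← ENNReal.ofReal_mul (by positivity)]
  -- outer piece
  have pieceout : ∫⁻ y, ((B n)ᶜ).indicator (fun y => Φ y * κ y) y ∂volume
      ≤ V * ENNReal.ofReal ((δ ^ ε / 4) ^ (-s)) := by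
    have hκbd : ∀ y ∈ (B n)ᶜ, Φ y * κ y ≤ ENNReal.ofReal ((δ ^ ε / 4) ^ (-s)) * Φ y := by
      intro y hy
      rw [mul_comm]
      refine mul_le_mul_left ?_ _
      have hdist : (2:ℝ) ^ n * δ < dist y x := by
        have := hy
        rw [Set.mem_compl_iff, hB, Metric.mem_closedBall, not_le] at this
        exact this
      have hnorm : δ ^ ε / 4 < ‖x - y‖ := by
        rw [← dist_eq_norm, dist_comm]
        linarith [houter]
      refine ENNReal.ofReal_le_ofReal ?_
      rw [Real.rpow_neg (by positivity), Real.rpow_neg (by positivity)]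
      exact inv_anti₀ (Real.rpow_pos_of_pos (by positivity) s)
        (Real.rpow_le_rpow (by positivity) hnorm.le hs.le)
    calc ∫⁻ y, ((B n)ᶜ).indicator (fun y => Φ y * κ y) y ∂volume
        = ∫⁻ y in (B n)ᶜ, Φ y * κ y ∂volume := lintegral_indicator (hBmeas n).compl _
      _ ≤ ∫⁻ y in (B n)ᶜ, ENNReal.ofReal ((δ ^ ε / 4) ^ (-s)) * Φ y ∂volume :=
          setLIntegral_mono (measurable_const.mul hΦmeas) hκbd
      _ ≤ ∫⁻ y, ENNReal.ofReal ((δ ^ ε / 4) ^ (-s)) * Φ y ∂volume :=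
          setLIntegral_le_lintegral _ _
      _ = ENNReal.ofReal ((δ ^ ε / 4) ^ (-s)) * ∫⁻ y, Φ y ∂volume := by
          rw [lintegral_const_mul _ hΦmeas]
      _ ≤ ENNReal.ofReal ((δ ^ ε / 4) ^ (-s)) * V :=
          mul_le_mul_right (mass_total hd hδ hPdec hPlow hPupp) _
      _ = V * ENNReal.ofReal ((δ ^ ε / 4) ^ (-s)) := mul_comm _ _
  -- combine
  calc ∫⁻ y, Φ y * κ y ∂volume ≤ _ := step
    _ ≤ V * ENNReal.ofReal (C * c₂) + V * ENNReal.ofReal ((n:ℝ) * (C * 4 ^ s))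
        + V * ENNReal.ofReal ((δ ^ ε / 4) ^ (-s)) :=
        add_le_add (add_le_add piece0 piecemid_sum) pieceout
    _ = V * ENNReal.ofReal (C * c₂ + (n:ℝ) * (C * 4 ^ s) + (δ ^ ε / 4) ^ (-s)) := by
        rw [← mul_add, ← mul_add, ← ENNReal.ofReal_add (by positivity) (by positivity),
          ← ENNReal.ofReal_add (by positivity) (by positivity)]

set_option maxHeartbeats 1600000 in
/-- If `μ` is a probability measure on the unit ball of `ℝ^d` with Frostman exponent `s`
at scales `[δ, δ^ε]`, then the `s`-energy at scale `δ` satisfies `I_s^δ(μ) ≤ C δ^{-dε}`. -/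
theorem stmt3 (d : ℕ) (hd : 0 < d) (C : ℝ) (hC : 1 ≤ C) (s : ℝ) (hs : 0 < s) (hsd : s < d)
    (ε : ℝ) (hε : 0 < ε) (hε' : ε ≤ 1 / 2)
    (P : EuclideanSpace ℝ (Fin d) → ℝ)
    (hPdec : ∀ x y : EuclideanSpace ℝ (Fin d), ‖x‖ ≤ ‖y‖ → P y ≤ P x)
    (hPlow : ∀ x, Set.indicator (Metric.closedBall (0 : EuclideanSpace ℝ (Fin d)) (1 / 2)) 1 x ≤ P x)
    (hPupp : ∀ x, P x ≤ Set.indicator (Metric.closedBall (0 : EuclideanSpace ℝ (Fin d)) 1) 1 x) :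
    ∃ δ₀ > (0:ℝ), ∀ δ : ℝ, 0 < δ → δ ≤ δ₀ →
      ∀ μ : Measure (EuclideanSpace ℝ (Fin d)), IsProbabilityMeasure μ →
      μ (Metric.closedBall 0 1)ᶜ = 0 →
      (∀ (x : EuclideanSpace ℝ (Fin d)) (r : ℝ), r ∈ Set.Icc δ (δ ^ ε) →
        μ (Metric.closedBall x r) ≤ ENNReal.ofReal (C * r ^ s)) →
      (∫ x : EuclideanSpace ℝ (Fin d), ∫ y : EuclideanSpace ℝ (Fin d),
          (∫ z, δ ^ (-(d:ℝ)) * P (δ⁻¹ • (x - z)) ∂μ) *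
          (∫ z, δ ^ (-(d:ℝ)) * P (δ⁻¹ • (y - z)) ∂μ) * ‖x - y‖ ^ (-s)) ≤
        C * δ ^ (-(d:ℝ) * ε) := by
  classical
  set ω : ℝ := (volume (Metric.ball (0 : EuclideanSpace ℝ (Fin d)) 1)).toReal with hω
  set c₂ : ℝ := 2 ^ s * (1 - 2 ^ (s - (d:ℝ)))⁻¹ with hc₂
  have hde : (0:ℝ) < (d:ℝ) * ε := by positivity
  -- eventual conditions near 0⁺
  have t1 : Filter.Tendsto (fun δ : ℝ => δ ^ ((d:ℝ) * ε)) (nhdsWithin 0 (Set.Ioi 0)) (nhds 0) := by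
    have hcont : ContinuousAt (fun x : ℝ => x ^ ((d:ℝ) * ε)) 0 :=
      Real.continuousAt_rpow_const 0 _ (Or.inr hde.le)
    have h0 : (0:ℝ) ^ ((d:ℝ) * ε) = 0 := Real.zero_rpow hde.ne'
    have := hcont.tendsto
    rw [h0] at this
    exact this.mono_left nhdsWithin_le_nhds
  have t2 : Filter.Tendsto (fun δ : ℝ => Real.logb 2 δ⁻¹ * δ ^ ((d:ℝ) * ε))
      (nhdsWithin 0 (Set.Ioi 0)) (nhds 0) := by
    have h2t := (tendsto_log_mul_rpow_nhdsGT_zero hde).neg.const_mul ((Real.log 2)⁻¹)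
    simp only [neg_zero, mul_zero] at h2t
    refine h2t.congr (fun δ => ?_)
    rw [← Real.log_div_log, Real.log_inv]
    ring
  have t3 : Filter.Tendsto (fun δ : ℝ => δ ^ (-(ε * s)) * δ ^ ((d:ℝ) * ε))
      (nhdsWithin 0 (Set.Ioi 0)) (nhds 0) := by
    have hexp : (0:ℝ) < -(ε * s) + (d:ℝ) * ε := by nlinarith
    have hbase : Filter.Tendsto (fun δ : ℝ => δ ^ (-(ε * s) + (d:ℝ) * ε))
        (nhdsWithin 0 (Set.Ioi 0)) (nhds 0) := by
      have hcont : ContinuousAt (fun x : ℝ => x ^ (-(ε * s) + (d:ℝ) * ε)) 0 :=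
        Real.continuousAt_rpow_const 0 _ (Or.inr hexp.le)
      have h0 : (0:ℝ) ^ (-(ε * s) + (d:ℝ) * ε) = 0 := Real.zero_rpow hexp.ne'
      have := hcont.tendsto
      rw [h0] at this
      exact this.mono_left nhdsWithin_le_nhds
    have heq : ∀ᶠ δ in nhdsWithin (0:ℝ) (Set.Ioi 0),
        δ ^ (-(ε * s) + (d:ℝ) * ε) = δ ^ (-(ε * s)) * δ ^ ((d:ℝ) * ε) := by
      filter_upwards [self_mem_nhdsWithin] with δ hδ
      exact Real.rpow_add hδ _ _
    exact Filter.Tendsto.congr' heq hbase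
  have hF : Filter.Tendsto (fun δ : ℝ => ω^2 * c₂ * δ ^ ((d:ℝ) * ε)
        + ω^2 * 4 ^ s * (Real.logb 2 δ⁻¹ * δ ^ ((d:ℝ) * ε))
        + ω^2 * 4 ^ s * (δ ^ (-(ε * s)) * δ ^ ((d:ℝ) * ε)))
      (nhdsWithin 0 (Set.Ioi 0)) (nhds 0) := by
    have := ((t1.const_mul (ω^2 * c₂)).add (t2.const_mul (ω^2 * 4 ^ s))).add
      (t3.const_mul (ω^2 * 4 ^ s))
    simpa using this
  have hev3 : ∀ᶠ δ in nhdsWithin (0:ℝ) (Set.Ioi 0),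
      ω^2 * (c₂ + Real.logb 2 δ⁻¹ * 4 ^ s + 4 ^ s * δ ^ (-(ε * s))) ≤ δ ^ (-((d:ℝ) * ε)) := by
    filter_upwards [hF.eventually_lt_const (zero_lt_one), self_mem_nhdsWithin] with δ hFδ hδpos
    have hδp : (0:ℝ) < δ := hδpos
    have hpow : 0 < δ ^ ((d:ℝ) * ε) := Real.rpow_pos_of_pos hδp _
    conv_rhs => rw [Real.rpow_neg hδp.le, ← one_div]
    rw [le_div_iff₀ hpow]
    calc ω^2 * (c₂ + Real.logb 2 δ⁻¹ * 4 ^ s + 4 ^ s * δ ^ (-(ε * s))) * δ ^ ((d:ℝ) * ε)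
        = ω^2 * c₂ * δ ^ ((d:ℝ) * ε)
          + ω^2 * 4 ^ s * (Real.logb 2 δ⁻¹ * δ ^ ((d:ℝ) * ε))
          + ω^2 * 4 ^ s * (δ ^ (-(ε * s)) * δ ^ ((d:ℝ) * ε)) := by ring
      _ ≤ 1 := hFδ.le
  have hev2 : ∀ᶠ δ in nhdsWithin (0:ℝ) (Set.Ioi 0), δ ^ (1 - ε) ≤ 1/2 := by
    have hexp : (0:ℝ) < 1 - ε := by linarith
    have hbase : Filter.Tendsto (fun δ : ℝ => δ ^ (1 - ε))
        (nhdsWithin 0 (Set.Ioi 0)) (nhds 0) := by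
      have hcont : ContinuousAt (fun x : ℝ => x ^ (1 - ε)) 0 :=
        Real.continuousAt_rpow_const 0 _ (Or.inr hexp.le)
      have h0 : (0:ℝ) ^ (1 - ε) = 0 := Real.zero_rpow hexp.ne'
      have := hcont.tendsto
      rw [h0] at this
      exact this.mono_left nhdsWithin_le_nhds
    exact hbase.eventually_le_const (by norm_num)
  have hev1 : ∀ᶠ δ in nhdsWithin (0:ℝ) (Set.Ioi 0), δ < 1 :=
    (eventually_lt_nhds zero_lt_one).filter_mono nhdsWithin_le_nhds
  have hall := hev1.and (hev2.and hev3)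
  rw [eventually_nhdsWithin_iff, Metric.eventually_nhds_iff] at hall
  obtain ⟨η, hη, hb⟩ := hall
  refine ⟨η/2, by positivity, ?_⟩
  intro δ hδ hδle μ hμprob hμc hFrost
  have hkey := hb (show dist δ (0:ℝ) < η by
    rw [Real.dist_eq, sub_zero, abs_of_pos hδ]; linarith) hδ
  obtain ⟨hδ1, hhalf, hnum⟩ := hkey
  -- the mollified density
  set f : EuclideanSpace ℝ (Fin d) → ℝ :=
    fun w => ∫ z, δ ^ (-(d:ℝ)) * P (δ⁻¹ • (w - z)) ∂μ with hf
  have hP0 := P_nonneg hPlow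
  have hf_nonneg : ∀ w, 0 ≤ f w := fun w =>
    integral_nonneg (fun z => mul_nonneg (Real.rpow_nonneg hδ.le _) (hP0 _))
  have hzmeas : ∀ w : EuclideanSpace ℝ (Fin d),
      Measurable (fun z : EuclideanSpace ℝ (Fin d) => δ ^ (-(d:ℝ)) * P (δ⁻¹ • (w - z))) := by
    intro w
    exact measurable_const.mul ((radial_meas hd P hPdec).comp
      ((measurable_const.sub measurable_id).const_smul δ⁻¹))
  have hzint : ∀ w : EuclideanSpace ℝ (Fin d),
      Integrable (fun z : EuclideanSpace ℝ (Fin d) => δ ^ (-(d:ℝ)) * P (δ⁻¹ • (w - z))) μ := by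
    intro w
    refine Integrable.mono' (integrable_const (δ ^ (-(d:ℝ)))) (hzmeas w).aestronglyMeasurable ?_
    refine Filter.Eventually.of_forall (fun z => ?_)
    rw [Real.norm_eq_abs, abs_mul, abs_of_nonneg (Real.rpow_nonneg hδ.le _),
      abs_of_nonneg (hP0 _)]
    have h1 := P_le_one hPupp (δ⁻¹ • (w - z))
    nlinarith [Real.rpow_pos_of_pos hδ (-(d:ℝ)), hP0 (δ⁻¹ • (w - z))]
  have hPhi_f : ∀ w, ENNReal.ofReal (f w) = Phi d δ P μ w := fun w =>
    ofReal_integral_eq_lintegral_ofReal (hzint w)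
      (Filter.Eventually.of_forall (fun z => mul_nonneg (Real.rpow_nonneg hδ.le _) (hP0 _)))
  have hfsm : StronglyMeasurable f := by
    have hFm : StronglyMeasurable (fun p : (EuclideanSpace ℝ (Fin d)) × (EuclideanSpace ℝ (Fin d))
        => δ ^ (-(d:ℝ)) * P (δ⁻¹ • (p.1 - p.2))) :=
      (measurable_const.mul ((radial_meas hd P hPdec).comp
        ((measurable_fst.sub measurable_snd).const_smul δ⁻¹))).stronglyMeasurable
    exact hFm.integral_prod_right'
  have hVne : volume (Metric.ball (0 : EuclideanSpace ℝ (Fin d)) 1) ≠ ⊤ :=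
    measure_ball_lt_top.ne
  have hlint_f : ∫⁻ y, ENNReal.ofReal (f y) ∂volume
      ≤ volume (Metric.ball (0 : EuclideanSpace ℝ (Fin d)) 1) := by
    calc ∫⁻ y, ENNReal.ofReal (f y) ∂volume = ∫⁻ y, Phi d δ P μ y ∂volume :=
          lintegral_congr (fun y => hPhi_f y)
      _ ≤ _ := mass_total hd hδ hPdec hPlow hPupp
  have hf_int : Integrable f volume := by
    refine ⟨hfsm.aestronglyMeasurable, ?_⟩
    rw [hasFiniteIntegral_iff_ofReal (Filter.Eventually.of_forall hf_nonneg)]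
    exact lt_of_le_of_lt hlint_f measure_ball_lt_top
  have hf_intR : ∫ y, f y ∂volume ≤ ω := by
    rw [integral_eq_lintegral_of_nonneg_ae (Filter.Eventually.of_forall hf_nonneg)
      hfsm.aestronglyMeasurable]
    exact ENNReal.toReal_mono hVne hlint_f
  -- the constant from G_bound
  set n : ℕ := ⌊Real.logb 2 (δ ^ (ε-1) / 2)⌋₊ with hn
  set Bq : ℝ := C * c₂ + (n:ℝ) * (C * 4 ^ s) + (δ ^ ε / 4) ^ (-s) with hBq
  have hc₂pos : 0 < c₂ := by
    have hq1 : (2:ℝ) ^ (s - (d:ℝ)) < 1 :=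
      Real.rpow_lt_one_of_one_lt_of_neg one_lt_two (by linarith)
    have h1q : (0:ℝ) < 1 - 2 ^ (s - (d:ℝ)) := by linarith
    rw [hc₂]; positivity
  have hBqpos : 0 ≤ Bq := by
    have h1 : (0:ℝ) ≤ (δ ^ ε / 4) ^ (-s) := Real.rpow_nonneg (by positivity) _
    have h2 : (0:ℝ) ≤ (4:ℝ) ^ s := Real.rpow_nonneg (by norm_num) _
    have h3 : (0:ℝ) ≤ C := le_trans zero_le_one hC
    have h4 : (0:ℝ) ≤ (n:ℝ) := Nat.cast_nonneg n
    rw [hBq]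
    nlinarith [mul_nonneg h3 hc₂pos.le, mul_nonneg h4 (mul_nonneg h3 h2), h1]
  have hksm : StronglyMeasurable (fun p : (EuclideanSpace ℝ (Fin d)) × (EuclideanSpace ℝ (Fin d))
      => ‖p.1 - p.2‖ ^ (-s)) :=
    (((measurable_fst.sub measurable_snd).norm).pow_const (-s)).stronglyMeasurable
  -- per-x bound
  have hH : ∀ x : EuclideanSpace ℝ (Fin d),
      (∫ y, f y * ‖x - y‖ ^ (-s) ∂volume) ≤ ω * Bq := by
    intro x
    have hsm : AEStronglyMeasurable (fun y => f y * ‖x - y‖ ^ (-s)) volume :=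
      (hfsm.mul (hksm.comp_measurable (measurable_const.prodMk measurable_id))).aestronglyMeasurable
    rw [integral_eq_lintegral_of_nonneg_ae (Filter.Eventually.of_forall
      (fun y => mul_nonneg (hf_nonneg y) (Real.rpow_nonneg (norm_nonneg _) _))) hsm]
    have hcongr : ∫⁻ y, ENNReal.ofReal (f y * ‖x - y‖ ^ (-s)) ∂volume
        = ∫⁻ y, Phi d δ P μ y * ENNReal.ofReal (‖x - y‖ ^ (-s)) ∂volume := by
      refine lintegral_congr (fun y => ?_)
      rw [ENNReal.ofReal_mul (hf_nonneg y), hPhi_f y]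
    rw [hcongr]
    have hGb := G_bound hd hC hs (by exact_mod_cast hsd) hε hε' hPdec hPlow hPupp hδ hδ1
      hhalf hFrost x
    calc (∫⁻ y, Phi d δ P μ y * ENNReal.ofReal (‖x - y‖ ^ (-s)) ∂volume).toReal
        ≤ ((volume (Metric.ball (0 : EuclideanSpace ℝ (Fin d)) 1))
            * ENNReal.ofReal Bq).toReal := by
          refine ENNReal.toReal_mono (ENNReal.mul_ne_top hVne ENNReal.ofReal_ne_top) ?_
          exact hGb
      _ = ω * Bq := by rw [ENNReal.toReal_mul, ENNReal.toReal_ofReal hBqpos]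
  have hH_nonneg : ∀ x : EuclideanSpace ℝ (Fin d),
      0 ≤ ∫ y, f y * ‖x - y‖ ^ (-s) ∂volume := fun x =>
    integral_nonneg (fun y => mul_nonneg (hf_nonneg y) (Real.rpow_nonneg (norm_nonneg _) _))
  -- main chain
  have hmain : (∫ x : EuclideanSpace ℝ (Fin d), ∫ y : EuclideanSpace ℝ (Fin d),
      f x * f y * ‖x - y‖ ^ (-s)) ≤ ω^2 * Bq := by
    have hrw : (∫ x : EuclideanSpace ℝ (Fin d), ∫ y : EuclideanSpace ℝ (Fin d),
        f x * f y * ‖x - y‖ ^ (-s))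
        = ∫ x : EuclideanSpace ℝ (Fin d), f x * ∫ y, f y * ‖x - y‖ ^ (-s) ∂volume := by
      congr 1
      funext x
      rw [← integral_const_mul]
      congr 1
      funext y
      ring
    rw [hrw]
    have hstep : (∫ x : EuclideanSpace ℝ (Fin d), f x * ∫ y, f y * ‖x - y‖ ^ (-s) ∂volume)
        ≤ ∫ x : EuclideanSpace ℝ (Fin d), f x * (ω * Bq) := by
      refine integral_mono_of_nonneg (Filter.Eventually.of_forall
        (fun x => mul_nonneg (hf_nonneg x) (hH_nonneg x))) (hf_int.mul_const _) ?_
      exact Filter.Eventually.of_forall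
        (fun x => mul_le_mul_of_nonneg_left (hH x) (hf_nonneg x))
    refine hstep.trans ?_
    rw [integral_mul_const]
    have hωB : 0 ≤ ω * Bq := mul_nonneg ENNReal.toReal_nonneg hBqpos
    calc (∫ x, f x ∂volume) * (ω * Bq) ≤ ω * (ω * Bq) :=
          mul_le_mul_of_nonneg_right hf_intR hωB
      _ = ω^2 * Bq := by ring
  -- final numeric bound
  have hlogb_n : (n:ℝ) ≤ Real.logb 2 δ⁻¹ := by
    have hδinv1 : 1 ≤ δ⁻¹ := by simpa using inv_anti₀ hδ hδ1.le
    have hεinvpos : (0:ℝ) < δ ^ (ε-1) := Real.rpow_pos_of_pos hδ _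
    have hinv : δ ^ (ε-1) = (δ ^ (1-ε))⁻¹ := by
      rw [← Real.rpow_neg hδ.le]; norm_num
    have harg1 : 1 ≤ δ ^ (ε-1) / 2 := by
      have h0 : 0 < δ ^ (1-ε) := Real.rpow_pos_of_pos hδ _
      rw [hinv, le_div_iff₀ (by norm_num : (0:ℝ) < 2), one_mul]
      calc (2:ℝ) = (1/2)⁻¹ := by norm_num
        _ ≤ (δ ^ (1-ε))⁻¹ := inv_anti₀ h0 hhalf
    have h1 : (n:ℝ) ≤ Real.logb 2 (δ ^ (ε-1) / 2) :=
      Nat.floor_le (Real.logb_nonneg one_lt_two harg1)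
    have h2 : Real.logb 2 (δ ^ (ε-1) / 2) ≤ Real.logb 2 (δ ^ (ε-1)) :=
      Real.logb_le_logb_of_le one_lt_two (by linarith) (by linarith)
    have h3 : Real.logb 2 (δ ^ (ε-1)) = (ε-1) * Real.logb 2 δ :=
      Real.logb_rpow_eq_mul_logb_of_pos hδ
    have h4 : Real.logb 2 δ⁻¹ = -Real.logb 2 δ := Real.logb_inv 2 δ
    have h5 : 0 ≤ Real.logb 2 δ⁻¹ := Real.logb_nonneg one_lt_two hδinv1
    nlinarith
  have h4s_id : (δ ^ ε / 4) ^ (-s) = 4 ^ s * δ ^ (-(ε * s)) := by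
    have hδεpos : (0:ℝ) < δ ^ ε := Real.rpow_pos_of_pos hδ ε
    rw [Real.div_rpow hδεpos.le (by norm_num : (0:ℝ) ≤ 4), ← Real.rpow_mul hδ.le,
      Real.rpow_neg (by norm_num : (0:ℝ) ≤ 4) s, div_inv_eq_mul,
      show ε * (-s) = -(ε * s) from by ring, mul_comm]
  have hfinal : ω^2 * Bq ≤ C * δ ^ (-(d:ℝ) * ε) := by
    have h4s : (0:ℝ) ≤ 4 ^ s := Real.rpow_nonneg (by norm_num) _
    have hδs : (0:ℝ) ≤ δ ^ (-(ε * s)) := Real.rpow_nonneg hδ.le _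
    have hK : Bq ≤ C * (c₂ + Real.logb 2 δ⁻¹ * 4 ^ s + 4 ^ s * δ ^ (-(ε * s))) := by
      rw [hBq, h4s_id]
      nlinarith [hc₂pos,
        mul_le_mul_of_nonneg_left hlogb_n (mul_nonneg (le_trans zero_le_one hC) h4s),
        mul_nonneg (show (0:ℝ) ≤ C - 1 from by linarith) (mul_nonneg h4s hδs)]
    have hωnn : (0:ℝ) ≤ ω^2 := sq_nonneg ω
    calc ω^2 * Bq ≤ ω^2 * (C * (c₂ + Real.logb 2 δ⁻¹ * 4 ^ s + 4 ^ s * δ ^ (-(ε * s)))) :=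
          mul_le_mul_of_nonneg_left hK hωnn
      _ = C * (ω^2 * (c₂ + Real.logb 2 δ⁻¹ * 4 ^ s + 4 ^ s * δ ^ (-(ε * s)))) := by ring
      _ ≤ C * δ ^ (-((d:ℝ) * ε)) := mul_le_mul_of_nonneg_left hnum (by linarith)
      _ = C * δ ^ (-(d:ℝ) * ε) := by rw [neg_mul]
  exact hmain.trans hfinal
end

section
/- Let μ, ν be Borel probability measures on ℝ and ξ ∈ ℝ. Then |((μ⊠ν)^)(ξ)| ≤ (‖(μ⊖μ)⊠(ν⊖ν))^(ξ)|)^{1/4}, where ^ denotes the Fourier transform. Equivalently, applying the Cauchy-Schwarz step twice: |(μ⊠ν)^(ξ)|⁴ ≤ ((μ⊖μ)⊠(ν⊖ν))^(ξ). -/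
open MeasureTheory

/-- Multiplicative convolution: pushforward of `μ × ν` under `(x, y) ↦ x * y`. -/
noncomputable def mulConv (μ ν : Measure ℝ) : Measure ℝ :=
  Measure.map (fun p : ℝ × ℝ => p.1 * p.2) (μ.prod ν)

/-- Difference (subtractive) convolution: pushforward of `μ × ν` under `(x, y) ↦ x - y`. -/
noncomputable def subConv (μ ν : Measure ℝ) : Measure ℝ :=
  Measure.map (fun p : ℝ × ℝ => p.1 - p.2) (μ.prod ν)

/-- Fourier transform of a measure: `σ^(ξ) = ∫ e^{-2πiξt} dσ(t)`. -/
noncomputable def ft (σ : Measure ℝ) (ξ : ℝ) : ℂ :=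
  ∫ t, Complex.exp (-(2 * Real.pi * ξ * t) * Complex.I) ∂σ

noncomputable def ee (ξ t : ℝ) : ℂ := Complex.exp (-(2 * Real.pi * ξ * t) * Complex.I)

lemma ft_eq (σ : Measure ℝ) (ξ : ℝ) : ft σ ξ = ∫ t, ee ξ t ∂σ := rfl

lemma ee_cont (ξ : ℝ) : Continuous (ee ξ) := by
  unfold ee; fun_prop

lemma ee_eq (ξ t : ℝ) : ee ξ t = Complex.exp ((-(2 * Real.pi * ξ * t) : ℝ) * Complex.I) := by
  unfold ee; push_cast; ring_nf

lemma norm_ee (ξ t : ℝ) : ‖ee ξ t‖ = 1 := by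
  rw [ee_eq, Complex.norm_exp_ofReal_mul_I]

lemma ee_mul_conj (ξ x y z : ℝ) :
    ee ξ (x * y) * (starRingEnd ℂ) (ee ξ (x * z)) = ee ξ (x * (y - z)) := by
  simp only [ee_eq, ← Complex.exp_conj, map_mul, Complex.conj_I, Complex.conj_ofReal,
    ← Complex.exp_add]
  congr 1
  push_cast
  ring

lemma int_bdd {α : Type*} [MeasurableSpace α] (P : Measure α) [IsFiniteMeasure P] {f : α → ℂ}
    (hm : AEStronglyMeasurable f P) (hb : ∀ a, ‖f a‖ ≤ 1) : Integrable f P :=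
  Integrable.mono' (integrable_const 1) hm (Filter.Eventually.of_forall hb)

lemma cs {P : Measure ℝ} [IsProbabilityMeasure P] {g : ℝ → ℝ}
    (hm : AEStronglyMeasurable g P) (hb : ∀ x, |g x| ≤ 1) :
    (∫ x, g x ∂P) ^ 2 ≤ ∫ x, g x ^ 2 ∂P := by
  have hmem : MemLp g 2 P :=
    MemLp.of_bound hm 1 (Filter.Eventually.of_forall (by simpa using hb))
  have h := ProbabilityTheory.variance_nonneg g P
  rw [ProbabilityTheory.variance_eq_sub hmem] at h
  have : ∫ x, (g ^ 2) x ∂P = ∫ x, g x ^ 2 ∂P := by simp [Pi.pow_apply]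
  rw [this] at h
  linarith

instance subConv_prob (μ : Measure ℝ) [IsProbabilityMeasure μ] :
    IsProbabilityMeasure (subConv μ μ) :=
  Measure.isProbabilityMeasure_map (by fun_prop)

lemma mulConv_comm (P Q : Measure ℝ) [SFinite P] [SFinite Q] : mulConv P Q = mulConv Q P := by
  rw [mulConv, mulConv, ← Measure.prod_swap,
    Measure.map_map (by fun_prop) measurable_swap]
  congr 1
  funext p
  exact mul_comm _ _

lemma step (ξ : ℝ) (P Q : Measure ℝ) [IsProbabilityMeasure P] [IsProbabilityMeasure Q] :
    ‖ft (mulConv P Q) ξ‖ ^ 2 ≤ (ft (mulConv P (subConv Q Q)) ξ).re := by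
  set F : ℝ → ℂ := fun x => ∫ y, ee ξ (x * y) ∂Q with hF
  have hsm : StronglyMeasurable (fun p : ℝ × ℝ => ee ξ (p.1 * p.2)) :=
    ((ee_cont ξ).comp (continuous_fst.mul continuous_snd)).stronglyMeasurable
  have hFsm : StronglyMeasurable F := hsm.integral_prod_right'
  have hFle : ∀ x, ‖F x‖ ≤ 1 := by
    intro x
    refine (norm_integral_le_integral_norm _).trans ?_
    simp only [norm_ee]
    simp
  have h1 : ft (mulConv P Q) ξ = ∫ x, F x ∂P := by
    rw [ft_eq, mulConv, integral_map (by fun_prop) (ee_cont ξ).aestronglyMeasurable]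
    exact integral_prod _ (int_bdd _ hsm.aestronglyMeasurable (fun p => (norm_ee _ _).le))
  have h2 : ‖ft (mulConv P Q) ξ‖ ^ 2 ≤ ∫ x, ‖F x‖ ^ 2 ∂P := by
    rw [h1]
    have hn := norm_integral_le_integral_norm (μ := P) F
    have hcs : (∫ x, ‖F x‖ ∂P) ^ 2 ≤ ∫ x, ‖F x‖ ^ 2 ∂P :=
      cs hFsm.norm.aestronglyMeasurable
        (fun x => by rw [abs_of_nonneg (norm_nonneg _)]; exact hFle x)
    calc ‖∫ x, F x ∂P‖ ^ 2 ≤ (∫ x, ‖F x‖ ∂P) ^ 2 :=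
          pow_le_pow_left₀ (norm_nonneg _) hn 2
      _ ≤ _ := hcs
  have hτ : ∀ x : ℝ, (∫ v, ee ξ (x * v) ∂(subConv Q Q)) = ((‖F x‖ ^ 2 : ℝ) : ℂ) := by
    intro x
    have hc : Continuous fun v : ℝ => ee ξ (x * v) := (ee_cont ξ).comp (by continuity)
    rw [subConv, integral_map (by fun_prop)
      hc.aestronglyMeasurable]
    have : ∀ p : ℝ × ℝ, ee ξ (x * (p.1 - p.2))
        = ee ξ (x * p.1) * (starRingEnd ℂ) (ee ξ (x * p.2)) := fun p => (ee_mul_conj _ _ _ _).symm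
    calc (∫ p : ℝ × ℝ, ee ξ (x * (p.1 - p.2)) ∂Q.prod Q)
        = ∫ p : ℝ × ℝ, ee ξ (x * p.1) * (starRingEnd ℂ) (ee ξ (x * p.2)) ∂Q.prod Q := by
          exact integral_congr_ae (Filter.Eventually.of_forall this)
      _ = (∫ y, ee ξ (x * y) ∂Q) * ∫ y, (starRingEnd ℂ) (ee ξ (x * y)) ∂Q :=
          integral_prod_mul (f := fun y => ee ξ (x * y)) (g := fun y => (starRingEnd ℂ) (ee ξ (x * y)))
      _ = F x * (starRingEnd ℂ) (F x) := by rw [integral_conj]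
      _ = ((‖F x‖ ^ 2 : ℝ) : ℂ) := by
          rw [Complex.mul_conj]
          norm_cast
          rw [Complex.normSq_eq_norm_sq]
  have h4 : (ft (mulConv P (subConv Q Q)) ξ).re = ∫ x, ‖F x‖ ^ 2 ∂P := by
    have hsm2 : StronglyMeasurable (fun p : ℝ × ℝ => ee ξ (p.1 * p.2)) := hsm
    rw [ft_eq, mulConv, integral_map (by fun_prop) (ee_cont ξ).aestronglyMeasurable,
      integral_prod _ (int_bdd _ hsm2.aestronglyMeasurable (fun p => (norm_ee _ _).le))]
    have : (∫ x, (∫ v, ee ξ (x * v) ∂(subConv Q Q)) ∂P)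
        = ∫ x, ((‖F x‖ ^ 2 : ℝ) : ℂ) ∂P := by
      exact integral_congr_ae (Filter.Eventually.of_forall fun x => hτ x)
    rw [this]
    have h5 : (∫ x, ((‖F x‖ ^ 2 : ℝ) : ℂ) ∂P) = ((∫ x, ‖F x‖ ^ 2 ∂P : ℝ) : ℂ) :=
      integral_ofReal (𝕜 := ℂ)
    rw [h5, Complex.ofReal_re]
  rw [h4]
  exact h2

/-- `|(μ⊠ν)^(ξ)|⁴ ≤ ((μ⊖μ)⊠(ν⊖ν))^(ξ)` (the right-hand side being real and nonnegative). -/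
theorem stmt7 (μ ν : Measure ℝ) [IsProbabilityMeasure μ] [IsProbabilityMeasure ν] (ξ : ℝ) :
    ‖ft (mulConv μ ν) ξ‖ ^ 4 ≤ (ft (mulConv (subConv μ μ) (subConv ν ν)) ξ).re := by
  have h1 := step ξ μ ν
  have h2 := step ξ (subConv ν ν) μ
  have hc1 : mulConv (subConv ν ν) μ = mulConv μ (subConv ν ν) := mulConv_comm _ _
  have hc2 : mulConv (subConv ν ν) (subConv μ μ) = mulConv (subConv μ μ) (subConv ν ν) :=
    mulConv_comm _ _
  rw [hc1, hc2] at h2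
  set z := ft (mulConv μ (subConv ν ν)) ξ with hz
  have hre : z.re ^ 2 ≤ ‖z‖ ^ 2 := by
    nlinarith [sq_nonneg z.im, Complex.sq_norm z, Complex.normSq_apply z]
  calc ‖ft (mulConv μ ν) ξ‖ ^ 4 = (‖ft (mulConv μ ν) ξ‖ ^ 2) ^ 2 := by ring
    _ ≤ z.re ^ 2 := by
        apply pow_le_pow_left₀ (by positivity) h1
    _ ≤ ‖z‖ ^ 2 := hre
    _ ≤ _ := h2
end

section
/- For every s ∈ (0,1/2) and every δ₀ > 0 there exist δ ∈ (0,δ₀] and a Borel probability measure μ on [1,2] such that ‖μ‖₂² is comparable to δ^{s-1} (μ is absolutely continuous with L² density) and |(μ⊠μ⊠μ)^(δ^{-1})| ≥ 1/2. In particular, a single-scale L² bound ‖μ_δ‖₂² ≤ δ^{s-1} does not imply power Fourier decay of the triple multiplicative convolution. -/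
open MeasureTheory

/-- Triple multiplicative convolution `μ⊠μ⊠μ`. -/
noncomputable def tripleMulConv (μ : Measure ℝ) : Measure ℝ :=
  Measure.map (fun p : ℝ × ℝ × ℝ => p.1 * p.2.1 * p.2.2) (μ.prod (μ.prod μ))

set_option maxHeartbeats 1000000

open Real in

lemma aux_cos (M K j k l : ℕ) (δ w x y z : ℝ)
    (hδ : 0 < δ) (hMδ : (M:ℝ)*δ = 1) (hw : w = δ/128)
    (hj : j < K) (hk : k < K) (hl : l < K)
    (hKd : (K:ℝ)*δ ≤ 1/256) (hK2d : (K:ℝ)*((K:ℝ)*δ) ≤ 1/128)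
    (hx1 : 1+(j:ℝ)*δ ≤ x) (hx2 : x ≤ 1+(j:ℝ)*δ+w)
    (hy1 : 1+(k:ℝ)*δ ≤ y) (hy2 : y ≤ 1+(k:ℝ)*δ+w)
    (hz1 : 1+(l:ℝ)*δ ≤ z) (hz2 : z ≤ 1+(l:ℝ)*δ+w) :
    1/2 ≤ Real.cos (2*π*(M:ℝ)*(x*y*z)) := by
  have hw0 : 0 < w := by rw [hw]; positivity
  have hwδ : w ≤ δ := by rw [hw]; linarith
  have hM0 : (0:ℝ) ≤ (M:ℝ) := Nat.cast_nonneg M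
  have hjK : (j:ℝ)+1 ≤ (K:ℝ) := by exact_mod_cast Nat.succ_le_of_lt hj
  have hkK : (k:ℝ)+1 ≤ (K:ℝ) := by exact_mod_cast Nat.succ_le_of_lt hk
  have hlK : (l:ℝ)+1 ≤ (K:ℝ) := by exact_mod_cast Nat.succ_le_of_lt hl
  have hAj : (j:ℝ)*δ + w ≤ (K:ℝ)*δ := by linarith [mul_le_mul_of_nonneg_right hjK hδ.le]
  have hAk : (k:ℝ)*δ + w ≤ (K:ℝ)*δ := by linarith [mul_le_mul_of_nonneg_right hkK hδ.le]
  have hAl : (l:ℝ)*δ + w ≤ (K:ℝ)*δ := by linarith [mul_le_mul_of_nonneg_right hlK hδ.le]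
  have hA0j : (0:ℝ) ≤ (j:ℝ)*δ + w := by positivity
  have hA0k : (0:ℝ) ≤ (k:ℝ)*δ + w := by positivity
  have hA0l : (0:ℝ) ≤ (l:ℝ)*δ + w := by positivity
  have hMw : (M:ℝ)*w = 1/128 := by rw [hw]; linear_combination hMδ/128
  have hMAj : (M:ℝ)*((j:ℝ)*δ+w) = (j:ℝ) + 1/128 := by linear_combination (j:ℝ)*hMδ + hMw
  have hMAk : (M:ℝ)*((k:ℝ)*δ+w) = (k:ℝ) + 1/128 := by linear_combination (k:ℝ)*hMδ + hMw
  have hMAl : (M:ℝ)*((l:ℝ)*δ+w) = (l:ℝ) + 1/128 := by linear_combination (l:ℝ)*hMδ + hMw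
  have hMAjK : (M:ℝ)*((j:ℝ)*δ+w) ≤ (K:ℝ) := by rw [hMAj]; linarith
  have hMAkK : (M:ℝ)*((k:ℝ)*δ+w) ≤ (K:ℝ) := by rw [hMAk]; linarith
  have hK0 : (0:ℝ) ≤ (K:ℝ) := Nat.cast_nonneg K
  have hpjk : (M:ℝ)*((j:ℝ)*δ+w) * ((k:ℝ)*δ+w) ≤ 1/128 :=
    le_trans (mul_le_mul hMAjK hAk hA0k hK0) hK2d
  have hpjl : (M:ℝ)*((j:ℝ)*δ+w) * ((l:ℝ)*δ+w) ≤ 1/128 :=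
    le_trans (mul_le_mul hMAjK hAl hA0l hK0) hK2d
  have hpkl : (M:ℝ)*((k:ℝ)*δ+w) * ((l:ℝ)*δ+w) ≤ 1/128 :=
    le_trans (mul_le_mul hMAkK hAl hA0l hK0) hK2d
  have hAlub : (l:ℝ)*δ + w ≤ 1/256 := hAl.trans hKd
  have hMAj0 : (0:ℝ) ≤ (M:ℝ)*((j:ℝ)*δ+w) := by positivity
  have htrip : ((M:ℝ)*((j:ℝ)*δ+w) * ((k:ℝ)*δ+w)) * ((l:ℝ)*δ+w) ≤ (1/128)*(1/256) :=
    mul_le_mul hpjk hAlub hA0l (by norm_num)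
  -- bounds on x y z
  have hjδ0 : (0:ℝ) ≤ (j:ℝ)*δ := by positivity
  have hkδ0 : (0:ℝ) ≤ (k:ℝ)*δ := by positivity
  have hlδ0 : (0:ℝ) ≤ (l:ℝ)*δ := by positivity
  have hx0 : (0:ℝ) ≤ x := by linarith
  have hy0 : (0:ℝ) ≤ y := by linarith
  have hz0 : (0:ℝ) ≤ z := by linarith
  have hAx : x ≤ 1 + ((j:ℝ)*δ + w) := by linarith
  have hAy : y ≤ 1 + ((k:ℝ)*δ + w) := by linarith
  have hAz : z ≤ 1 + ((l:ℝ)*δ + w) := by linarith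
  have hprod_up : x*y*z ≤ (1+((j:ℝ)*δ+w))*(1+((k:ℝ)*δ+w))*(1+((l:ℝ)*δ+w)) := by
    have h1 : x*y ≤ (1+((j:ℝ)*δ+w))*(1+((k:ℝ)*δ+w)) :=
      mul_le_mul hAx hAy hy0 (by linarith)
    exact mul_le_mul h1 hAz hz0 (by positivity)
  have hMxyz_up : (M:ℝ)*(x*y*z) ≤ (M:ℝ) + ((j:ℝ)+(k:ℝ)+(l:ℝ)) + 7/128 := by
    have step : (M:ℝ)*(x*y*z) ≤ (M:ℝ)*((1+((j:ℝ)*δ+w))*(1+((k:ℝ)*δ+w))*(1+((l:ℝ)*δ+w))) :=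
      mul_le_mul_of_nonneg_left hprod_up hM0
    have e : (M:ℝ)*((1+((j:ℝ)*δ+w))*(1+((k:ℝ)*δ+w))*(1+((l:ℝ)*δ+w)))
        = (M:ℝ) + ((M:ℝ)*((j:ℝ)*δ+w) + (M:ℝ)*((k:ℝ)*δ+w) + (M:ℝ)*((l:ℝ)*δ+w))
          + ((M:ℝ)*((j:ℝ)*δ+w)*((k:ℝ)*δ+w) + (M:ℝ)*((j:ℝ)*δ+w)*((l:ℝ)*δ+w)
             + (M:ℝ)*((k:ℝ)*δ+w)*((l:ℝ)*δ+w))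
          + (M:ℝ)*((j:ℝ)*δ+w)*((k:ℝ)*δ+w)*((l:ℝ)*δ+w) := by ring
    rw [e] at step
    linarith [hMAj, hMAk, hMAl]
  have hprod_low : (1+(j:ℝ)*δ)*(1+(k:ℝ)*δ)*(1+(l:ℝ)*δ) ≤ x*y*z := by
    have hb1 : (0:ℝ) ≤ 1+(j:ℝ)*δ := by positivity
    have hb2 : (0:ℝ) ≤ 1+(k:ℝ)*δ := by positivity
    have h1 : (1+(j:ℝ)*δ)*(1+(k:ℝ)*δ) ≤ x*y := mul_le_mul hx1 hy1 hb2 hx0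
    exact mul_le_mul h1 hz1 (by positivity) (by positivity)
  have hMxyz_low : (M:ℝ) + ((j:ℝ)+(k:ℝ)+(l:ℝ)) ≤ (M:ℝ)*(x*y*z) := by
    have step : (M:ℝ)*((1+(j:ℝ)*δ)*(1+(k:ℝ)*δ)*(1+(l:ℝ)*δ)) ≤ (M:ℝ)*(x*y*z) :=
      mul_le_mul_of_nonneg_left hprod_low hM0
    have elow : (M:ℝ)*((1+(j:ℝ)*δ)*(1+(k:ℝ)*δ)*(1+(l:ℝ)*δ))
        = (M:ℝ) + ((j:ℝ)+(k:ℝ)+(l:ℝ))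
          + ((j:ℝ)*((k:ℝ)*δ) + (j:ℝ)*((l:ℝ)*δ) + (k:ℝ)*((l:ℝ)*δ))
          + ((j:ℝ)*(k:ℝ)*(l:ℝ))*(δ*δ) := by
      linear_combination ((j:ℝ)+(k:ℝ)+(l:ℝ) + ((j:ℝ)*(k:ℝ)+(j:ℝ)*(l:ℝ)+(k:ℝ)*(l:ℝ))*δ
        + (j:ℝ)*(k:ℝ)*(l:ℝ)*δ^2) * hMδ
    rw [elow] at step
    have n1 : (0:ℝ) ≤ (j:ℝ)*((k:ℝ)*δ) := by positivity
    have n2 : (0:ℝ) ≤ (j:ℝ)*((l:ℝ)*δ) := by positivity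
    have n3 : (0:ℝ) ≤ (k:ℝ)*((l:ℝ)*δ) := by positivity
    have n4 : (0:ℝ) ≤ ((j:ℝ)*(k:ℝ)*(l:ℝ))*(δ*δ) := by positivity
    linarith
  -- reduce cos mod 2π
  have hcast : 2*π*(M:ℝ)*(x*y*z)
      = 2*π*((M:ℝ)*(x*y*z) - (M:ℝ) - ((j:ℝ)+(k:ℝ)+(l:ℝ))) + ((M + j + k + l : ℤ):ℝ)*(2*π) := by
    push_cast; ring
  rw [hcast, Real.cos_add_int_mul_two_pi]
  set θ := (M:ℝ)*(x*y*z) - (M:ℝ) - ((j:ℝ)+(k:ℝ)+(l:ℝ)) with hθdef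
  have h0 : 0 ≤ θ := by rw [hθdef]; linarith
  have h1 : θ ≤ 1/6 := by rw [hθdef]; linarith
  have hπ := Real.pi_pos
  have h2 : 2*π*θ ≤ π/3 := by
    have := mul_le_mul_of_nonneg_left h1 (by positivity : (0:ℝ) ≤ 2*π)
    linarith
  have h3 : (0:ℝ) ≤ 2*π*θ := by positivity
  calc (1:ℝ)/2 = Real.cos (π/3) := (Real.cos_pi_div_three).symm
    _ ≤ Real.cos (2*π*θ) := Real.cos_le_cos_of_nonneg_of_le_pi h3 (by linarith) h2

open MeasureTheory Real in
/-- For every `s ∈ (0,1/2)` and `δ₀ > 0` there are `δ ∈ (0,δ₀]` and a probability measure `μ`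
on `[1,2]`, absolutely continuous with density `f` satisfying `‖f‖₂² ∼ δ^{s-1}`, while
`|(μ⊠μ⊠μ)^(δ⁻¹)| ≥ 1/2`: the single-scale `L²` bound does not imply Fourier decay. -/
theorem stmt8 :
    ∃ C ≥ (1:ℝ), ∀ s : ℝ, 0 < s → s < 1 / 2 → ∀ δ₀ > (0:ℝ),
      ∃ δ : ℝ, δ ∈ Set.Ioc (0:ℝ) δ₀ ∧
      ∃ (μ : Measure ℝ) (f : ℝ → ℝ), IsProbabilityMeasure μ ∧
        μ (Set.Icc (1:ℝ) 2)ᶜ = 0 ∧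
        μ = volume.withDensity (fun x => ENNReal.ofReal (f x)) ∧
        C⁻¹ * δ ^ (s - 1) ≤ (∫ x : ℝ, f x ^ 2) ∧
        (∫ x : ℝ, f x ^ 2) ≤ C * δ ^ (s - 1) ∧
        1 / 2 ≤ ‖ft (tripleMulConv μ) δ⁻¹‖ := by
  refine ⟨128, by norm_num, ?_⟩
  intro s hs hs2 δ₀ hδ₀
  have h12 : 0 < 1 - 2*s := by linarith
  have hApos : (0:ℝ) < (512:ℝ) ^ ((1:ℝ)/(1-2*s)) := Real.rpow_pos_of_pos (by norm_num) _
  have hA1 : (1:ℝ) ≤ (512:ℝ) ^ ((1:ℝ)/(1-2*s)) :=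
    Real.one_le_rpow (by norm_num) (by positivity)
  obtain ⟨M, hM⟩ := exists_nat_gt (max δ₀⁻¹ ((512:ℝ) ^ ((1:ℝ)/(1-2*s))))
  have hM1 : (1:ℝ) ≤ (M:ℝ) := le_of_lt (lt_of_le_of_lt (hA1.trans (le_max_right _ _)) hM)
  have hMpos : (0:ℝ) < (M:ℝ) := by linarith
  set δ : ℝ := (M:ℝ)⁻¹ with hδdef
  have hδpos : 0 < δ := inv_pos.mpr hMpos
  have hδ1 : δ ≤ 1 := by rw [hδdef]; exact inv_le_one_of_one_le₀ hM1
  have hδδ₀ : δ ≤ δ₀ := by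
    have h1 : δ₀⁻¹ ≤ (M:ℝ) := le_of_lt (lt_of_le_of_lt (le_max_left _ _) hM)
    have := inv_anti₀ (inv_pos.mpr hδ₀) h1
    rwa [inv_inv] at this
  have hMδ : (M:ℝ)*δ = 1 := mul_inv_cancel₀ (ne_of_gt hMpos)
  -- the main smallness bound
  have hkey : δ ^ (1-2*s) ≤ 1/512 := by
    have hδA : δ ≤ ((512:ℝ) ^ ((1:ℝ)/(1-2*s)))⁻¹ :=
      inv_anti₀ hApos (le_of_lt (lt_of_le_of_lt (le_max_right _ _) hM))
    calc δ ^ (1-2*s) ≤ (((512:ℝ) ^ ((1:ℝ)/(1-2*s)))⁻¹) ^ (1-2*s) :=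
          Real.rpow_le_rpow hδpos.le hδA h12.le
      _ = (((512:ℝ) ^ ((1:ℝ)/(1-2*s))) ^ (1-2*s))⁻¹ := Real.inv_rpow hApos.le _
      _ = 1/512 := by
          rw [← Real.rpow_mul (by norm_num : (0:ℝ) ≤ 512), one_div_mul_cancel h12.ne',
            Real.rpow_one]
          norm_num
  have hrs : δ ^ ((1:ℝ)-s) ≤ δ ^ (1-2*s) :=
    Real.rpow_le_rpow_of_exponent_ge hδpos hδ1 (by linarith)
  have hds1 : (1:ℝ) ≤ δ ^ (-s) :=
    Real.one_le_rpow_of_pos_of_le_one_of_nonpos hδpos hδ1 (by linarith)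
  have hdpos : (0:ℝ) < δ ^ (-s) := Real.rpow_pos_of_pos hδpos _
  have hP : (0:ℝ) < δ ^ ((1:ℝ)-s) := Real.rpow_pos_of_pos hδpos _
  set K := ⌈δ ^ (-s)⌉₊ with hKdef
  have hKlb : δ ^ (-s) ≤ (K:ℝ) := Nat.le_ceil _
  have hKub : (K:ℝ) ≤ 2 * δ ^ (-s) := by
    have := Nat.ceil_lt_add_one hdpos.le
    calc (K:ℝ) ≤ δ ^ (-s) + 1 := by exact_mod_cast this.le
      _ ≤ 2 * δ ^ (-s) := by linarith
  have hKpos : 0 < K := Nat.ceil_pos.mpr hdpos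
  have hKR : (0:ℝ) < (K:ℝ) := by exact_mod_cast hKpos
  have hsplit : δ ^ ((1:ℝ)-s) = δ ^ (-s) * δ := by
    rw [show (1:ℝ)-s = -s + 1 by ring, Real.rpow_add hδpos, Real.rpow_one]
  have h2split : δ ^ (1-2*s) = δ ^ (-s) * δ ^ ((1:ℝ)-s) := by
    rw [show 1-2*s = -s + (1-s) by ring, Real.rpow_add hδpos]
  have hKδlow : δ ^ ((1:ℝ)-s) ≤ (K:ℝ)*δ := by
    rw [hsplit]; exact mul_le_mul_of_nonneg_right hKlb hδpos.le
  have hKδub : (K:ℝ)*δ ≤ 2 * δ ^ ((1:ℝ)-s) := by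
    calc (K:ℝ)*δ ≤ (2*δ^(-s))*δ := mul_le_mul_of_nonneg_right hKub hδpos.le
      _ = 2 * (δ^(-s)*δ) := by ring
      _ = 2 * δ ^ ((1:ℝ)-s) := by rw [← hsplit]
  have hKd : (K:ℝ)*δ ≤ 1/256 := by
    calc (K:ℝ)*δ ≤ 2 * δ ^ ((1:ℝ)-s) := hKδub
      _ ≤ 2 * δ ^ (1-2*s) := by linarith
      _ ≤ 1/256 := by linarith
  have hKd2 : (K:ℝ)*((K:ℝ)*δ) ≤ 1/128 := by
    calc (K:ℝ)*((K:ℝ)*δ) ≤ (2*δ^(-s)) * (2*δ^((1:ℝ)-s)) :=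
          mul_le_mul hKub hKδub (by positivity) (by positivity)
      _ = 4 * (δ^(-s) * δ^((1:ℝ)-s)) := by ring
      _ = 4 * δ ^ (1-2*s) := by rw [← h2split]
      _ ≤ 1/128 := by linarith
  -- the construction
  set w : ℝ := δ/128 with hwdef
  have hwpos : 0 < w := by rw [hwdef]; positivity
  have hwδ : w ≤ δ := by rw [hwdef]; linarith
  set c : ℝ := ((K:ℝ)*w)⁻¹ with hcdef
  have hKw_ne : (K:ℝ)*w ≠ 0 := by positivity
  have hcpos : 0 < c := by rw [hcdef]; positivity
  set S : Set ℝ := ⋃ j ∈ Finset.range K, Set.Ico (1+(j:ℝ)*δ) (1+(j:ℝ)*δ+w) with hSdef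
  have hSm : MeasurableSet S := by
    rw [hSdef]
    exact (Finset.range K).measurableSet_biUnion (fun j _ => measurableSet_Ico)
  have hmono : ∀ p q : ℕ, p < q → 1+(p:ℝ)*δ+w ≤ 1+(q:ℝ)*δ := by
    intro p q hpq
    have hc : (p:ℝ)+1 ≤ (q:ℝ) := by exact_mod_cast Nat.succ_le_of_lt hpq
    have := mul_le_mul_of_nonneg_right hc hδpos.le
    linarith
  have hdisj : (↑(Finset.range K) : Set ℕ).PairwiseDisjoint
      (fun j : ℕ => Set.Ico (1+(j:ℝ)*δ) (1+(j:ℝ)*δ+w)) := by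
    intro a _ b _ hab
    have key : ∀ p q : ℕ, p < q →
        Disjoint (Set.Ico (1+(p:ℝ)*δ) (1+(p:ℝ)*δ+w)) (Set.Ico (1+(q:ℝ)*δ) (1+(q:ℝ)*δ+w)) := by
      intro p q hpq
      refine Set.Ico_disjoint_Ico.mpr ?_
      exact le_trans (min_le_left _ _) (le_trans (hmono p q hpq) (le_max_right _ _))
    rcases hab.lt_or_gt with h|h
    · exact key a b h
    · exact (key b a h).symm
  have hvolS : volume S = ENNReal.ofReal ((K:ℝ)*w) := by
    rw [hSdef, measure_biUnion_finset hdisj (fun b _ => measurableSet_Ico)]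
    have heach : ∀ j ∈ Finset.range K,
        volume (Set.Ico (1+(j:ℝ)*δ) (1+(j:ℝ)*δ+w)) = ENNReal.ofReal w := by
      intro j _; rw [Real.volume_Ico]; norm_num
    rw [Finset.sum_congr rfl heach, Finset.sum_const, Finset.card_range, nsmul_eq_mul,
      ← ENNReal.ofReal_natCast K, ← ENNReal.ofReal_mul (Nat.cast_nonneg K)]
  set μ : Measure ℝ := volume.withDensity
      (fun x => ENNReal.ofReal (S.indicator (fun _ => c) x)) with hμdef
  have hind : (fun x => ENNReal.ofReal (S.indicator (fun _ => c) x))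
      = S.indicator (fun _ => ENNReal.ofReal c) := by
    funext x; by_cases hx : x ∈ S <;> simp [hx]
  have hμapp : ∀ T : Set ℝ, MeasurableSet T → μ T = ENNReal.ofReal c * volume (S ∩ T) := by
    intro T hT
    rw [hμdef, withDensity_apply _ hT, hind, lintegral_indicator hSm, setLIntegral_const,
      Measure.restrict_apply hSm]
  have hμS : μ Sᶜ = 0 := by
    rw [hμapp _ hSm.compl, Set.inter_compl_self]
    simp
  have hprob : IsProbabilityMeasure μ := by
    constructor
    rw [hμapp _ MeasurableSet.univ, Set.inter_univ, hvolS,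
      ← ENNReal.ofReal_mul hcpos.le, hcdef, inv_mul_cancel₀ hKw_ne, ENNReal.ofReal_one]
  have hSsub : S ⊆ Set.Icc 1 2 := by
    intro x hx
    rw [hSdef] at hx
    simp only [Set.mem_iUnion, Finset.mem_range, Set.mem_Ico] at hx
    obtain ⟨j, hj, hx1, hx2⟩ := hx
    have hjδ : (0:ℝ) ≤ (j:ℝ)*δ := by positivity
    have hup : (j:ℝ)*δ + w ≤ (K:ℝ)*δ := by
      have hc : (j:ℝ)+1 ≤ (K:ℝ) := by exact_mod_cast Nat.succ_le_of_lt hj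
      have := mul_le_mul_of_nonneg_right hc hδpos.le
      linarith
    constructor
    · linarith
    · linarith
  -- L² value
  have hfsq : (fun x => (S.indicator (fun _ => c) x)^2) = S.indicator (fun _ => c^2) := by
    funext x; by_cases hx : x ∈ S <;> simp [hx]
  have hintval : (∫ x : ℝ, (S.indicator (fun _ => c) x)^2) = c := by
    have h1 : (∫ x : ℝ, (S.indicator (fun _ => c) x)^2)
        = ∫ x : ℝ, S.indicator (fun _ => c^2) x := by rw [hfsq]
    rw [h1, integral_indicator_const (c^2) hSm, measureReal_def, hvolS,
      ENNReal.toReal_ofReal (by positivity : (0:ℝ) ≤ (K:ℝ)*w), smul_eq_mul, hcdef, sq,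
      ← mul_assoc, mul_inv_cancel₀ hKw_ne, one_mul]
  have hceq : c = 128/((K:ℝ)*δ) := by
    rw [hcdef, hwdef, show (K:ℝ)*(δ/128) = ((K:ℝ)*δ)/128 by ring, inv_div]
  have hpow : δ ^ (s-1) = (δ ^ ((1:ℝ)-s))⁻¹ := by
    rw [show s-1 = -(1-s) by ring, Real.rpow_neg hδpos.le]
  have hKδpos : (0:ℝ) < (K:ℝ)*δ := by positivity
  have hup : c ≤ 128 * δ^(s-1) := by
    rw [hceq, hpow]
    calc (128:ℝ)/((K:ℝ)*δ) ≤ 128/(δ^((1:ℝ)-s)) :=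
          div_le_div_of_nonneg_left (by norm_num) hP hKδlow
      _ = 128 * (δ^((1:ℝ)-s))⁻¹ := by rw [div_eq_mul_inv]
  have hlow : (128:ℝ)⁻¹ * δ^(s-1) ≤ c := by
    rw [hceq, hpow]
    have h1 : (128:ℝ)/(2*δ^((1:ℝ)-s)) ≤ 128/((K:ℝ)*δ) :=
      div_le_div_of_nonneg_left (by norm_num) hKδpos hKδub
    have h2 : (128:ℝ)/(2*δ^((1:ℝ)-s)) = 64 * (δ^((1:ℝ)-s))⁻¹ := by
      rw [div_eq_mul_inv, mul_inv]; ring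
    have h3 : (128:ℝ)⁻¹ * (δ^((1:ℝ)-s))⁻¹ ≤ 64 * (δ^((1:ℝ)-s))⁻¹ :=
      mul_le_mul_of_nonneg_right (by norm_num) (by positivity)
    linarith
  -- Fourier part
  haveI := hprob
  set ξ : ℝ := δ⁻¹ with hξdef
  have hξM : ξ = (M:ℝ) := by rw [hξdef, hδdef, inv_inv]
  set P : Measure (ℝ×ℝ×ℝ) := μ.prod (μ.prod μ) with hPdef
  haveI hPprob : IsProbabilityMeasure P := by rw [hPdef]; infer_instance
  have hgm : Measurable (fun p : ℝ×ℝ×ℝ => p.1*p.2.1*p.2.2) := by fun_prop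
  set F : ℝ×ℝ×ℝ → ℂ :=
    fun p => Complex.exp (-(2*(π:ℂ)*(ξ:ℂ)*((p.1*p.2.1*p.2.2 : ℝ):ℂ))*Complex.I) with hFdef
  have hFarg : ∀ p : ℝ×ℝ×ℝ, (-(2*(π:ℂ)*(ξ:ℂ)*((p.1*p.2.1*p.2.2 : ℝ):ℂ))*Complex.I)
      = ((-(2*π*ξ*(p.1*p.2.1*p.2.2)) : ℝ) : ℂ) * Complex.I := by
    intro p; push_cast; ring
  have hFcont : Continuous F := by rw [hFdef]; fun_prop
  have hFnorm : ∀ p, ‖F p‖ = 1 := by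
    intro p
    simp only [hFdef]
    rw [hFarg p]
    exact Complex.norm_exp_ofReal_mul_I _
  have hFint : Integrable F P :=
    Integrable.mono' (integrable_const (1:ℝ)) hFcont.aestronglyMeasurable
      (Filter.Eventually.of_forall fun p => le_of_eq (hFnorm p))
  have hre : ∀ p : ℝ×ℝ×ℝ, (F p).re = Real.cos (2*π*ξ*(p.1*p.2.1*p.2.2)) := by
    intro p
    simp only [hFdef]
    rw [hFarg p, Complex.exp_ofReal_mul_I_re, Real.cos_neg]
  have hmap : ft (tripleMulConv μ) ξ = ∫ p, F p ∂P := by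
    unfold ft tripleMulConv
    rw [← hPdef]
    have hF1cont : Continuous (fun t : ℝ => Complex.exp (-(2*(π:ℂ)*(ξ:ℂ)*(t:ℂ))*Complex.I)) := by
      fun_prop
    exact integral_map hgm.aemeasurable hF1cont.aestronglyMeasurable
  have hcos_cont : Continuous (fun p : ℝ×ℝ×ℝ => Real.cos (2*π*ξ*(p.1*p.2.1*p.2.2))) := by
    fun_prop
  have hcos_int : Integrable (fun p : ℝ×ℝ×ℝ => Real.cos (2*π*ξ*(p.1*p.2.1*p.2.2))) P :=
    Integrable.mono' (integrable_const (1:ℝ)) hcos_cont.aestronglyMeasurable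
      (Filter.Eventually.of_forall fun p => by
        rw [Real.norm_eq_abs]; exact Real.abs_cos_le_one _)
  have hμS1 : μ S = 1 := (prob_compl_eq_zero_iff hSm).mp hμS
  have haeS : ∀ᵐ p ∂P, p ∈ S ×ˢ (S ×ˢ S) := by
    have hSSS : P (S ×ˢ (S ×ˢ S)) = 1 := by
      rw [hPdef, Measure.prod_prod, Measure.prod_prod, hμS1, one_mul, one_mul]
    have h0 : P (S ×ˢ (S ×ˢ S))ᶜ = 0 :=
      (prob_compl_eq_zero_iff (hSm.prod (hSm.prod hSm))).mpr hSSS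
    rw [ae_iff]
    exact h0
  have hptwise : ∀ᵐ p ∂P, (1:ℝ)/2 ≤ Real.cos (2*π*ξ*(p.1*p.2.1*p.2.2)) := by
    filter_upwards [haeS] with p hp
    simp only [Set.mem_prod] at hp
    obtain ⟨hp1, hp2, hp3⟩ := hp
    rw [hSdef] at hp1 hp2 hp3
    simp only [Set.mem_iUnion, Finset.mem_range, Set.mem_Ico] at hp1 hp2 hp3
    obtain ⟨j, hj, hxj1, hxj2⟩ := hp1
    obtain ⟨k, hk, hyk1, hyk2⟩ := hp2
    obtain ⟨l, hl, hzl1, hzl2⟩ := hp3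
    rw [hξM]
    exact aux_cos M K j k l δ w p.1 p.2.1 p.2.2 hδpos hMδ hwdef hj hk hl hKd hKd2
      hxj1 hxj2.le hyk1 hyk2.le hzl1 hzl2.le
  have hmain : 1/2 ≤ ‖ft (tripleMulConv μ) ξ‖ := by
    have hconst : (∫ _p : ℝ×ℝ×ℝ, (1:ℝ)/2 ∂P) = 1/2 := by
      rw [integral_const, measureReal_def, measure_univ, ENNReal.toReal_one, one_smul]
    calc (1:ℝ)/2 = ∫ _p : ℝ×ℝ×ℝ, (1:ℝ)/2 ∂P := hconst.symm
      _ ≤ ∫ p, Real.cos (2*π*ξ*(p.1*p.2.1*p.2.2)) ∂P :=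
          integral_mono_ae (integrable_const _) hcos_int hptwise
      _ = ∫ p, (F p).re ∂P :=
          integral_congr_ae (Filter.Eventually.of_forall fun p => (hre p).symm)
      _ = (∫ p, F p ∂P).re := integral_re hFint
      _ ≤ ‖∫ p, F p ∂P‖ := by
          exact Complex.re_le_norm _
      _ = ‖ft (tripleMulConv μ) ξ‖ := by rw [hmap]
  rw [hξdef] at hmain
  exact ⟨δ, ⟨hδpos, hδδ₀⟩, μ, S.indicator (fun _ => c), hprob,
    measure_mono_null (Set.compl_subset_compl.mpr hSsub) hμS, hμdef,
    by rw [hintval]; exact hlow, by rw [hintval]; exact hup, hmain⟩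
end

section
/- Let 0 < s < 2/3, let c > 0 be small enough (absolute), δ ∈ (0,1], and let μ be the normalized Lebesgue measure on [0, c·δ^{1-s}], i.e. μ = (c δ^{1-s})^{-1}·Leb|_{[0,cδ^{1-s}]}. Then μ satisfies ‖μ‖₂² = c^{-1}δ^{s-1}, the triple multiplicative convolution μ⊠μ⊠μ is supported on [0, c³δ^{3-3s}] ⊆ [0, cδ], and consequently |(μ⊠μ⊠μ)^(δ^{-1})| ≥ 1/2. -/
open MeasureTheory

/-- For `0 < s < 2/3`, `c` small (absolute) and `μ` the normalized Lebesgue measure on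
`[0, c δ^{1-s}]`: `‖μ‖₂² = c⁻¹ δ^{s-1}`, `μ⊠μ⊠μ` is supported on
`[0, c³δ^{3-3s}] ⊆ [0, cδ]`, and `|(μ⊠μ⊠μ)^(δ⁻¹)| ≥ 1/2`. -/
theorem stmt9 :
    ∃ c₀ > (0:ℝ), ∀ c : ℝ, 0 < c → c ≤ c₀ → ∀ s : ℝ, 0 < s → s < 2 / 3 →
      ∀ δ : ℝ, δ ∈ Set.Ioc (0:ℝ) 1 →
      ∀ μ : Measure ℝ,
        μ = (ENNReal.ofReal (c * δ ^ ((1:ℝ) - s)))⁻¹ •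
              volume.restrict (Set.Icc 0 (c * δ ^ ((1:ℝ) - s))) →
        (∫ x : ℝ, ((μ.rnDeriv volume x).toReal) ^ 2) = c⁻¹ * δ ^ (s - 1) ∧
        tripleMulConv μ (Set.Icc (0:ℝ) (c ^ 3 * δ ^ (3 - 3 * s)))ᶜ = 0 ∧
        Set.Icc (0:ℝ) (c ^ 3 * δ ^ (3 - 3 * s)) ⊆ Set.Icc (0:ℝ) (c * δ) ∧
        1 / 2 ≤ ‖ft (tripleMulConv μ) δ⁻¹‖ := by
  refine ⟨1/6, by norm_num, fun c hc hc6 s hs hs23 δ hδ μ hμ => ?_⟩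
  obtain ⟨hδ0, hδ1⟩ := hδ
  set a : ℝ := c * δ ^ ((1:ℝ) - s) with ha_def
  have hδ1s : (0:ℝ) < δ ^ ((1:ℝ) - s) := Real.rpow_pos_of_pos hδ0 _
  have ha : 0 < a := mul_pos hc hδ1s
  set T : Set ℝ := Set.Icc 0 a with hT_def
  have hTmeas : MeasurableSet T := measurableSet_Icc
  have hvolT : volume T = ENNReal.ofReal a := by
    rw [hT_def, Real.volume_Icc, sub_zero]
  have hofa : ENNReal.ofReal a ≠ 0 := by
    simp [ENNReal.ofReal_eq_zero, not_le, ha]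
  -- μ is a probability measure
  have hμuniv : μ Set.univ = 1 := by
    rw [hμ]
    simp only [Measure.smul_apply, Measure.restrict_apply_univ, smul_eq_mul]
    rw [hvolT, ENNReal.inv_mul_cancel hofa ENNReal.ofReal_ne_top]
  have hprob : IsProbabilityMeasure μ := ⟨hμuniv⟩
  -- μ vanishes outside T
  have hμTc : μ Tᶜ = 0 := by
    rw [hμ]
    simp only [Measure.smul_apply, Measure.restrict_apply (hTmeas.compl), smul_eq_mul]
    simp
  -- a^3 = c^3 * δ^(3-3s)
  have ha3 : a ^ 3 = c ^ 3 * δ ^ (3 - 3 * s) := by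
    have hexp : ((1:ℝ) - s) * ((3:ℕ):ℝ) = 3 - 3 * s := by push_cast; ring
    rw [ha_def, mul_pow, ← Real.rpow_natCast (δ ^ ((1:ℝ) - s)) 3,
      ← Real.rpow_mul hδ0.le, hexp]
  -- Part 1 : the L² norm
  have part1 : (∫ x : ℝ, ((μ.rnDeriv volume x).toReal) ^ 2) = c⁻¹ * δ ^ (s - 1) := by
    have h1 : (volume.restrict T).rnDeriv volume =ᵐ[volume] T.indicator 1 :=
      Measure.rnDeriv_restrict_self volume hTmeas
    have h2 : μ.rnDeriv volume =ᵐ[volume]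
        fun x => (ENNReal.ofReal a)⁻¹ * T.indicator 1 x := by
      rw [hμ]
      refine (Measure.rnDeriv_smul_left_of_ne_top (volume.restrict T) volume
        (by simp [ha])).trans ?_
      filter_upwards [h1] with x hx
      simp [hx]
    have h3 : (∫ x : ℝ, ((μ.rnDeriv volume x).toReal) ^ 2)
        = ∫ x : ℝ, T.indicator (fun _ => (a⁻¹) ^ 2) x := by
      refine integral_congr_ae ?_
      filter_upwards [h2] with x hx
      rw [hx]
      by_cases hxT : x ∈ T
      · simp [Set.indicator_of_mem hxT, ENNReal.toReal_inv, ENNReal.toReal_ofReal ha.le]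
      · simp [Set.indicator_of_notMem hxT]
    rw [h3, integral_indicator hTmeas]
    rw [setIntegral_const, hT_def, Real.volume_real_Icc_of_le ha.le, sub_zero,
      smul_eq_mul]
    rw [ha_def]
    rw [show ((1:ℝ) - s) = -(s-1) by ring, Real.rpow_neg hδ0.le]
    field_simp
  refine ⟨part1, ?_⟩
  -- Part 2 : support of the triple convolution
  set B : ℝ := c ^ 3 * δ ^ (3 - 3 * s) with hB_def
  have hmulmeas : Measurable (fun p : ℝ × ℝ × ℝ => p.1 * p.2.1 * p.2.2) :=
    (measurable_fst.mul (measurable_fst.comp measurable_snd)).mul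
      (measurable_snd.comp measurable_snd)
  have part2 : tripleMulConv μ (Set.Icc (0:ℝ) B)ᶜ = 0 := by
    rw [tripleMulConv, Measure.map_apply hmulmeas (measurableSet_Icc.compl)]
    have hsub : (fun p : ℝ × ℝ × ℝ => p.1 * p.2.1 * p.2.2) ⁻¹' (Set.Icc (0:ℝ) B)ᶜ ⊆
        (Tᶜ ×ˢ (Set.univ : Set (ℝ × ℝ))) ∪
        ((Set.univ : Set ℝ) ×ˢ (Tᶜ ×ˢ (Set.univ : Set ℝ))) ∪
        ((Set.univ : Set ℝ) ×ˢ ((Set.univ : Set ℝ) ×ˢ Tᶜ)) := by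
      intro p hp
      by_contra hmem
      simp only [Set.mem_union, Set.mem_prod, Set.mem_univ, Set.mem_compl_iff,
        and_true, true_and, not_or] at hmem
      obtain ⟨⟨h1, h2⟩, h3⟩ := hmem
      rw [not_not] at h1 h2 h3
      obtain ⟨h1a, h1b⟩ := h1
      obtain ⟨h2a, h2b⟩ := h2
      obtain ⟨h3a, h3b⟩ := h3
      apply hp
      constructor
      · positivity
      · rw [← ha3]
        calc p.1 * p.2.1 * p.2.2 ≤ a * a * a := by
              apply mul_le_mul (mul_le_mul h1b h2b h2a ha.le) h3b h3a
              positivity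
          _ = a ^ 3 := by ring
    refine measure_mono_null hsub ?_
    refine measure_union_null (measure_union_null ?_ ?_) ?_
    · rw [Measure.prod_prod]
      simp [hμTc]
    · rw [Measure.prod_prod, Measure.prod_prod]
      simp [hμTc]
    · rw [Measure.prod_prod, Measure.prod_prod]
      simp [hμTc]
  refine ⟨part2, ?_⟩
  -- Part 3 : inclusion
  have hc1 : c ≤ 1 := hc6.trans (by norm_num)
  have part3 : Set.Icc (0:ℝ) B ⊆ Set.Icc (0:ℝ) (c * δ) := by
    apply Set.Icc_subset_Icc le_rfl
    rw [hB_def]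
    have h1 : δ ^ (3 - 3 * s) ≤ δ := by
      nth_rewrite 2 [show δ = δ ^ (1:ℝ) by rw [Real.rpow_one]]
      apply Real.rpow_le_rpow_of_exponent_ge hδ0 hδ1
      linarith
    have h2 : c ^ 3 ≤ c := by nlinarith [sq_nonneg c, sq_nonneg (1 - c), mul_pos hc hc]
    exact mul_le_mul h2 h1 (Real.rpow_pos_of_pos hδ0 _).le hc.le
  refine ⟨part3, ?_⟩
  -- Part 4 : Fourier transform lower bound
  set ν : Measure ℝ := tripleMulConv μ with hν_def
  have hνprob : IsProbabilityMeasure ν := by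
    have : IsProbabilityMeasure (μ.prod (μ.prod μ)) := by infer_instance
    exact Measure.isProbabilityMeasure_map hmulmeas.aemeasurable
  -- ν-a.e. t ∈ [0, cδ]
  have hae : ∀ᵐ t ∂ν, t ∈ Set.Icc (0:ℝ) (c * δ) := by
    rw [ae_iff]
    refine measure_mono_null (fun t ht => ?_) part2
    exact fun hmem => ht (part3 hmem)
  have hπ : (0:ℝ) < Real.pi := Real.pi_pos
  -- the integrand
  set f : ℝ → ℂ := fun t => Complex.exp (-(2 * Real.pi * δ⁻¹ * t) * Complex.I) with hf_def
  have hfnorm : ∀ t, ‖f t‖ = 1 := by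
    intro t
    simp [hf_def, Complex.norm_exp]
  have hfmeas : Measurable f := by
    rw [hf_def]; fun_prop
  have hfint : Integrable f ν := by
    refine ⟨hfmeas.aestronglyMeasurable, ?_⟩
    apply HasFiniteIntegral.of_bounded (C := 1)
    filter_upwards with t
    rw [hfnorm t]
  -- real part computation
  have hre : ∀ t : ℝ, (f t).re = Real.cos (2 * Real.pi * δ⁻¹ * t) := by
    intro t
    simp [hf_def, Complex.exp_re, Real.cos_neg]
  have hcosbound : ∀ᵐ t ∂ν, (1:ℝ)/2 ≤ (f t).re := by
    filter_upwards [hae] with t ht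
    obtain ⟨ht0, htcδ⟩ := ht
    rw [hre]
    have hθ0 : 0 ≤ 2 * Real.pi * δ⁻¹ * t := by positivity
    have hθ : 2 * Real.pi * δ⁻¹ * t ≤ Real.pi / 3 := by
      have hδinv : (0:ℝ) < δ⁻¹ := by positivity
      have h1 : 2 * Real.pi * δ⁻¹ * t ≤ 2 * Real.pi * δ⁻¹ * (c * δ) := by
        apply mul_le_mul_of_nonneg_left htcδ (by positivity)
      have h2 : 2 * Real.pi * δ⁻¹ * (c * δ) = 2 * Real.pi * c := by
        field_simp
      rw [h2] at h1
      have h3 : 2 * Real.pi * c ≤ 2 * Real.pi * (1/6) := by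
        apply mul_le_mul_of_nonneg_left hc6 (by positivity)
      calc 2 * Real.pi * δ⁻¹ * t ≤ 2 * Real.pi * (1/6) := h1.trans h3
        _ = Real.pi / 3 := by ring
    have : Real.cos (Real.pi / 3) ≤ Real.cos (2 * Real.pi * δ⁻¹ * t) :=
      Real.cos_le_cos_of_nonneg_of_le_pi hθ0 (by linarith) hθ
    rw [Real.cos_pi_div_three] at this
    linarith
  have hre_int : (1:ℝ)/2 ≤ (∫ t, f t ∂ν).re := by
    have hint_re : ∫ t, (f t).re ∂ν = (∫ t, f t ∂ν).re := by
      simpa [RCLike.re_to_complex] using integral_re (𝕜 := ℂ) hfint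
    rw [← hint_re]
    have h12 : (1:ℝ)/2 = ∫ _ : ℝ, (1:ℝ)/2 ∂ν := by
      simp [measure_univ]
    rw [h12]
    apply integral_mono_ae (integrable_const _) ?_ hcosbound
    refine ⟨(Complex.measurable_re.comp hfmeas).aestronglyMeasurable, ?_⟩
    apply HasFiniteIntegral.of_bounded (C := 1)
    filter_upwards with t
    calc |(f t).re| ≤ ‖f t‖ := Complex.abs_re_le_norm _
      _ = 1 := hfnorm t
  calc (1:ℝ)/2 ≤ (∫ t, f t ∂ν).re := hre_int
    _ ≤ ‖∫ t, f t ∂ν‖ := Complex.re_le_norm _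
    _ = ‖ft ν δ⁻¹‖ := rfl
end
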